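/- arXiv:math/0304380 — 2 statements merged into one kernel-verified Lean document; each statement's English description precedes it below -/
import Mathlib

section
/- Let w = v·t_r ∈ Ŵ_max be a maximal element with first layer ideal I^w, and let Ξ(I^w) be the set of maximal elements of Δ⁺ \ I^w with respect to ≼. Let D_max = {x ∈ V : (x,α) ≤ 1 for all α ∈ Π and (x,θ) ≥ 0}. Then #Ξ(I^w) = k if and only if v(r) lies on a face of codimension k of the simplex D_max. -/
open scoped RealInnerProductSpace
open Module

noncomputable section

variable {V : Type*} [NormedAddCommGroup V] [InnerProductSpace ℝ V]

/-- The underlying function of the orthogonal reflection in the hyperplane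
orthogonal to `α` (the identity if `α = 0`). -/
def reflFun (α : V) (x : V) : V := x - (2 * ⟪α, x⟫ / ⟪α, α⟫) • α

lemma reflFun_involutive (α : V) : Function.Involutive (reflFun α) := by
  intro x
  by_cases h : α = 0
  · simp [reflFun, h]
  · have hs : ⟪α, α⟫ ≠ 0 := inner_self_ne_zero.mpr h
    have h1 : ⟪α, x - (2 * ⟪α, x⟫ / ⟪α, α⟫) • α⟫ = -⟪α, x⟫ := by
      rw [inner_sub_right, real_inner_smul_right]
      field_simp
      ring
    simp only [reflFun]
    rw [h1, show 2 * -⟪α, x⟫ / ⟪α, α⟫ = -(2 * ⟪α, x⟫ / ⟪α, α⟫) by ring,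
      neg_smul, sub_neg_eq_add]
    abel

/-- The orthogonal reflection in the hyperplane orthogonal to `α`, as a linear
equivalence (the identity if `α = 0`). -/
def sRefl (α : V) : V ≃ₗ[ℝ] V where
  toFun := reflFun α
  map_add' x y := by
    simp only [reflFun, inner_add_right]
    rw [show 2 * (⟪α, x⟫ + ⟪α, y⟫) / ⟪α, α⟫
        = 2 * ⟪α, x⟫ / ⟪α, α⟫ + 2 * ⟪α, y⟫ / ⟪α, α⟫ by ring, add_smul]
    abel
  map_smul' c x := by
    simp only [reflFun, real_inner_smul_right, RingHom.id_apply, smul_sub, smul_smul]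
    congr 2
    ring
  invFun := reflFun α
  left_inv := reflFun_involutive α
  right_inv := reflFun_involutive α

/-- The coroot `α∨ = 2α/(α,α)` of a vector `α`. -/
def corootVec (α : V) : V := (2 / ⟪α, α⟫) • α

/-- The (affine) hyperplane `{x | (x, μ) = k}`. -/
def rootHyperplane (μ : V) (k : ℝ) : Set V := {x : V | ⟪x, μ⟫ = k}

/-- `R` is a region of the hyperplane arrangement whose hyperplanes are encoded by the
pairs `(μ, k) ∈ A` (the hyperplane `{x | (x,μ) = k}`): a connected component of the
complement of the union of the hyperplanes. -/
def IsRegionOf (A : Set (V × ℝ)) (R : Set V) : Prop :=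
  ∃ x ∈ (⋃ h ∈ A, rootHyperplane h.1 h.2)ᶜ,
    R = connectedComponentIn (⋃ h ∈ A, rootHyperplane h.1 h.2)ᶜ x

open Classical in
/-- The characteristic polynomial of the hyperplane arrangement encoded by
`A : Set (V × ℝ)` in an ambient space of dimension `p`, evaluated at `t`, via
Whitney's theorem: `χ(A,t) = ∑ (-1)^{#S} t^{dim ∩ S}`, the sum being over all central
subarrangements `S ⊆ A` (junk value `0` if `A` is infinite). -/
noncomputable def charPolyEval (p : ℕ) (A : Set (V × ℝ)) (t : ℝ) : ℝ :=
  if hA : A.Finite then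
    ∑ S ∈ hA.toFinset.powerset,
      if (⋂ h ∈ (S : Set (V × ℝ)), rootHyperplane h.1 h.2).Nonempty then
        (-1 : ℝ) ^ S.card *
          t ^ (p - Module.finrank ℝ (Submodule.span ℝ (Prod.fst '' (S : Set (V × ℝ)))))
      else 0
  else 0

/-- The linear action of `w = v·t_r ∈ Ŵ` on `V ⊕ ℝδ`:
`w(μ + kδ) = v(μ) + (k - (μ,r))δ`. -/
def affAct (v : V ≃ₗ[ℝ] V) (r : V) (β : V × ℝ) : V × ℝ :=
  (v β.1, β.2 - ⟪β.1, r⟫)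

/-- The linear action of `w⁻¹` on `V ⊕ ℝδ`, for `w = v·t_r ∈ Ŵ`:
`w⁻¹(μ + kδ) = v⁻¹(μ) + (k + (v⁻¹μ, r))δ`. -/
def affActInv (v : V ≃ₗ[ℝ] V) (r : V) (β : V × ℝ) : V × ℝ :=
  (v.symm β.1, β.2 + ⟪v.symm β.1, r⟫)

/-- The affine `∗`-action of `w = v·t_r ∈ Ŵ` on `V`: `w ∗ x = v(x + r)`. -/
def affStar (v : V ≃ₗ[ℝ] V) (r : V) (x : V) : V := v (x + r)

/-- The affine `∗`-action of `w⁻¹` on `V`, for `w = v·t_r ∈ Ŵ`: `w⁻¹ ∗ x = v⁻¹(x) - r`. -/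
def affStarInv (v : V ≃ₗ[ℝ] V) (r : V) (x : V) : V := v.symm x - r

/-- An irreducible reduced crystallographic root system `Δ` of rank `p`, spanning a real
inner product space `V`, together with a choice of positive system `Δ⁺ = pos`, simple
roots `α₁, …, α_p`, and the highest root `θ`. -/
structure RootSystemData (V : Type*) [NormedAddCommGroup V] [InnerProductSpace ℝ V]
    (p : ℕ) where
  /-- the set of roots -/
  Δ : Set V
  finite : Δ.Finite
  zero_notMem : (0 : V) ∉ Δ
  span_eq_top : Submodule.span ℝ Δ = ⊤
  finrank_eq : Module.finrank ℝ V = p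
  neg_mem : ∀ α ∈ Δ, -α ∈ Δ
  /-- reduced: the only multiples of a root that are roots are `±α` -/
  reduced : ∀ α ∈ Δ, ∀ c : ℝ, c • α ∈ Δ → c = 1 ∨ c = -1
  /-- crystallographic: Cartan integers -/
  crystallographic : ∀ α ∈ Δ, ∀ β ∈ Δ, ∃ n : ℤ, 2 * ⟪α, β⟫ / ⟪α, α⟫ = (n : ℝ)
  reflect_mem : ∀ α ∈ Δ, ∀ β ∈ Δ, sRefl α β ∈ Δ
  /-- irreducible: no splitting into two orthogonal parts -/
  irred : ∀ S T : Set V, Δ = S ∪ T → (∀ a ∈ S, ∀ b ∈ T, ⟪a, b⟫ = 0) → S = ∅ ∨ T = ∅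
  /-- the simple roots `α₁, …, α_p` -/
  simpleRoot : Fin p → V
  simpleRoot_mem : ∀ i, simpleRoot i ∈ Δ
  simpleRoot_indep : LinearIndependent ℝ simpleRoot
  /-- the positive roots `Δ⁺` -/
  pos : Set V
  pos_def : pos = {α ∈ Δ | ∃ c : Fin p → ℕ, α = ∑ i, (c i : ℝ) • simpleRoot i}
  pos_or_neg : ∀ α ∈ Δ, α ∈ pos ∨ -α ∈ pos
  /-- the highest root -/
  θ : V
  θ_mem : θ ∈ pos
  θ_highest : ∀ α ∈ pos, ∃ c : Fin p → ℕ, θ = α + ∑ i, (c i : ℝ) • simpleRoot i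

namespace RootSystemData

variable {p : ℕ} (RS : RootSystemData V p)

/-- The coroot lattice `Q∨`, generated by the coroots of the roots. -/
def corootLattice : AddSubgroup V := AddSubgroup.closure (corootVec '' RS.Δ)

/-- The coweight lattice `P∨ = {x | (x, α) ∈ ℤ for all roots α}`. -/
def coweightLattice : AddSubgroup V where
  carrier := {x : V | ∀ α ∈ RS.Δ, ∃ n : ℤ, ⟪x, α⟫ = (n : ℝ)}
  zero_mem' := fun α _ => ⟨0, by simp⟩
  add_mem' := by
    intro x y hx hy α hα
    obtain ⟨n, hn⟩ := hx α hα
    obtain ⟨m, hm⟩ := hy α hα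
    exact ⟨n + m, by rw [inner_add_left, hn, hm]; push_cast; ring⟩
  neg_mem' := by
    intro x hx α hα
    obtain ⟨n, hn⟩ := hx α hα
    exact ⟨-n, by rw [inner_neg_left, hn]; push_cast; ring⟩

/-- The index of connection `f = [P∨ : Q∨]`. -/
noncomputable def indexOfConnection : ℕ :=
  RS.corootLattice.relIndex RS.coweightLattice

/-- The Weyl group `W`, generated by the reflections in the roots. -/
def weylGroup : Subgroup (V ≃ₗ[ℝ] V) :=
  Subgroup.closure {w : V ≃ₗ[ℝ] V | ∃ α ∈ RS.Δ, w = sRefl α}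

/-- The partial order `μ ≼ γ` on roots: `γ - μ` is a nonnegative integer combination of
the simple roots. -/
def rootLe (μ γ : V) : Prop :=
  ∃ c : Fin p → ℕ, γ = μ + ∑ i, (c i : ℝ) • RS.simpleRoot i

/-- An ideal of `Δ⁺`. -/
def IsIdeal (I : Set V) : Prop :=
  I ⊆ RS.pos ∧ ∀ γ ∈ I, ∀ μ ∈ RS.pos, γ + μ ∈ RS.Δ → γ + μ ∈ I

/-- An antichain in the poset `(Δ⁺, ≼)`. -/
def IsRootAntichain (Γ : Set V) : Prop :=
  Γ ⊆ RS.pos ∧ ∀ μ ∈ Γ, ∀ γ ∈ Γ, RS.rootLe μ γ → μ = γ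

/-- The set of minimal elements (generators, for an ideal) of a subset of `Δ⁺`. -/
def gens (I : Set V) : Set V := {γ ∈ I | ∀ μ ∈ I, RS.rootLe μ γ → μ = γ}

/-- The ideal `I⟨Γ⟩` generated by an antichain `Γ`. -/
def idealGen (Γ : Set V) : Set V := {μ ∈ RS.pos | ∃ γ ∈ Γ, RS.rootLe γ μ}

/-- The set `Ξ(I)` of maximal elements of `Δ⁺ \ I`. -/
def XiSet (I : Set V) : Set V :=
  {γ ∈ RS.pos \ I | ∀ μ ∈ RS.pos \ I, RS.rootLe γ μ → γ = μ}

/-- `k(μ, I)`: the minimal number of summands in an expression of `μ` as a sum of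
positive roots not in `I`. -/
noncomputable def kNum (I : Set V) (μ : V) : ℕ :=
  sInf {n : ℕ | ∃ f : Fin n → V, (∀ i, f i ∈ RS.pos \ I) ∧ μ = ∑ i, f i}

/-- A root is short if it is strictly shorter than the highest root `θ`. -/
def IsShort (α : V) : Prop := α ∈ RS.Δ ∧ ⟪α, α⟫ < ⟪RS.θ, RS.θ⟫

/-- The short positive roots `Δ⁺_s`. -/
def shortPos : Set V := {α ∈ RS.pos | ⟪α, α⟫ < ⟪RS.θ, RS.θ⟫}

/-- The long positive roots `Δ⁺_l`. -/
def longPos : Set V := {α ∈ RS.pos | ⟪α, α⟫ = ⟪RS.θ, RS.θ⟫}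

/-- `Δ` has roots of exactly two lengths, the squared length ratio (long over short)
being `ratio`. -/
def LengthRatio (ratio : ℝ) : Prop :=
  ∃ ls : ℝ, 0 < ls ∧ ls < ⟪RS.θ, RS.θ⟫ ∧
    (∀ α ∈ RS.Δ, ⟪α, α⟫ = ls ∨ ⟪α, α⟫ = ⟪RS.θ, RS.θ⟫) ∧
    (∃ α ∈ RS.Δ, ⟪α, α⟫ = ls) ∧ ⟪RS.θ, RS.θ⟫ = ratio * ls

/-- `Δ` has roots of two different lengths. -/
def TwoLengths : Prop := ∃ ratio : ℝ, RS.LengthRatio ratio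

/-- The simple roots `Π(Δ⁺_s)` of the root system `Δ_s` of short roots with respect to
the positive system `Δ⁺_s`: the short positive roots that are not sums of two short
positive roots. -/
def shortSimple : Set V :=
  {α ∈ RS.shortPos | ¬ ∃ β ∈ RS.shortPos, ∃ γ ∈ RS.shortPos, α = β + γ}

/-- The positive affine roots `Δ̂⁺`, an affine root `μ + kδ` being encoded as the pair
`(μ, k)`. -/
def affPos : Set (V × ℝ) :=
  {β : V × ℝ | β.1 ∈ RS.Δ ∧ (0 < β.2 ∨ (β.2 = 0 ∧ β.1 ∈ RS.pos))}

/-- A pair `(v, r)` with `v ∈ W`, `r ∈ Q∨` represents the element `w = v·t_r` of the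
affine Weyl group `Ŵ = W ⋉ Q∨`; it is dominant if `w(α) ∈ Δ̂⁺` for all `α ∈ Π`. -/
def IsDominantPair (v : V ≃ₗ[ℝ] V) (r : V) : Prop :=
  v ∈ RS.weylGroup ∧ r ∈ RS.corootLattice ∧
    ∀ i, affAct v r (RS.simpleRoot i, 0) ∈ RS.affPos

/-- `N(w) = {β ∈ Δ̂⁺ | w(β) ∈ -Δ̂⁺}` for `w = v·t_r`. -/
def Nset (v : V ≃ₗ[ℝ] V) (r : V) : Set (V × ℝ) :=
  {β : V × ℝ | β ∈ RS.affPos ∧ -(affAct v r β) ∈ RS.affPos}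

/-- The first layer ideal `I_w = {μ ∈ Δ⁺ | δ - μ ∈ N(w)}` of `w = v·t_r`. -/
def firstLayerIdeal (v : V ≃ₗ[ℝ] V) (r : V) : Set V :=
  {μ ∈ RS.pos | ((-μ, (1 : ℝ)) : V × ℝ) ∈ RS.Nset v r}

/-- `w = v·t_r` is minimal: dominant, and for every affine simple root `α ∈ Π̂`,
writing `w⁻¹(α) = kδ + μ`, one has `k ≥ -1`. -/
def IsMinimalPair (v : V ≃ₗ[ℝ] V) (r : V) : Prop :=
  RS.IsDominantPair v r ∧
    (∀ i, -1 ≤ (affActInv v r (RS.simpleRoot i, 0)).2) ∧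
    -1 ≤ (affActInv v r (-RS.θ, 1)).2

/-- `w = v·t_r` is maximal: dominant, and for every affine simple root `α ∈ Π̂`,
writing `w⁻¹(α) = kδ + μ`, one has `k ≤ 1`. -/
def IsMaximalPair (v : V ≃ₗ[ℝ] V) (r : V) : Prop :=
  RS.IsDominantPair v r ∧
    (∀ i, (affActInv v r (RS.simpleRoot i, 0)).2 ≤ 1) ∧
    (affActInv v r (-RS.θ, 1)).2 ≤ 1

/-- `w = v·t_r` is `s`-minimal: dominant, `k ≥ -1` for short simple `α`, and `k ≥ 0`
for `α ∈ Π̂_l = Π_l ∪ {α₀}`, where `w⁻¹(α) = kδ + μ`. -/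
def IsSMinimalPair (v : V ≃ₗ[ℝ] V) (r : V) : Prop :=
  RS.IsDominantPair v r ∧
    (∀ i, RS.IsShort (RS.simpleRoot i) →
      -1 ≤ (affActInv v r (RS.simpleRoot i, 0)).2) ∧
    (∀ i, ¬ RS.IsShort (RS.simpleRoot i) →
      0 ≤ (affActInv v r (RS.simpleRoot i, 0)).2) ∧
    0 ≤ (affActInv v r (-RS.θ, 1)).2

/-- `w = v·t_r` is `s`-maximal: dominant, `k ≤ 1` for short simple `α`, and `k ≤ 0`
for `α ∈ Π̂_l = Π_l ∪ {α₀}`, where `w⁻¹(α) = kδ + μ`. -/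
def IsSMaximalPair (v : V ≃ₗ[ℝ] V) (r : V) : Prop :=
  RS.IsDominantPair v r ∧
    (∀ i, RS.IsShort (RS.simpleRoot i) →
      (affActInv v r (RS.simpleRoot i, 0)).2 ≤ 1) ∧
    (∀ i, ¬ RS.IsShort (RS.simpleRoot i) →
      (affActInv v r (RS.simpleRoot i, 0)).2 ≤ 0) ∧
    (affActInv v r (-RS.θ, 1)).2 ≤ 0

/-- The open fundamental Weyl chamber `C`. -/
def chamber : Set V := {x : V | ∀ i, 0 < ⟪x, RS.simpleRoot i⟫}

/-- The open fundamental alcove `A`. -/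
def alcove : Set V := {x : V | (∀ i, 0 < ⟪x, RS.simpleRoot i⟫) ∧ ⟪x, RS.θ⟫ < 1}

/-- The affine arrangement of all hyperplanes `{x | (x,μ) = k}`, `μ ∈ Δ⁺`, `k ∈ ℤ`,
whose regions are the alcoves. -/
def affineArrangement : Set (V × ℝ) :=
  {h : V × ℝ | h.1 ∈ RS.pos ∧ ∃ k : ℤ, h.2 = (k : ℝ)}

/-- The dominant region `R_I` of the Catalan (equivalently, Shi) arrangement attached
to an ideal `I ⊆ Δ⁺` under the Shi bijection. -/
def regionOfIdeal (I : Set V) : Set V :=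
  {x ∈ RS.chamber | (∀ γ ∈ I, 1 < ⟪x, γ⟫) ∧ ∀ γ ∈ RS.pos \ I, ⟪x, γ⟫ < 1}

/-- The semi-Catalan arrangement `Cat_s(Δ)`. -/
def semiCatalan : Set (V × ℝ) :=
  {h : V × ℝ | h.1 ∈ RS.shortPos ∧ (h.2 = -1 ∨ h.2 = 0 ∨ h.2 = 1)} ∪
    {h : V × ℝ | h.1 ∈ RS.longPos ∧ h.2 = 0}

/-- The `m`-semi-Catalan arrangement `Cat_s^m(Δ)`. -/
def semiCatalanM (m : ℕ) : Set (V × ℝ) :=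
  {h : V × ℝ | h.1 ∈ RS.shortPos ∧ ∃ k : ℤ, |k| ≤ (m : ℤ) ∧ h.2 = (k : ℝ)} ∪
    {h : V × ℝ | h.1 ∈ RS.longPos ∧ h.2 = 0}

/-- The region `R_Γ^(s)` of the semi-Catalan arrangement attached to a short
antichain `Γ`. -/
def sRegion (Γ : Set V) : Set V :=
  {x ∈ RS.chamber | (∀ μ ∈ RS.idealGen Γ ∩ RS.shortPos, 1 < ⟪x, μ⟫) ∧
    ∀ μ ∈ RS.shortPos \ RS.idealGen Γ, ⟪x, μ⟫ < 1}

/-- `α` has height `n` (sum of the coefficients over the simple roots). -/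
def heightIs (α : V) (n : ℕ) : Prop :=
  ∃ c : Fin p → ℕ, α = ∑ i, (c i : ℝ) • RS.simpleRoot i ∧ ∑ i, c i = n

/-- `e` enumerates the exponents `e₁, …, e_p` of the Weyl group `W`, characterized by the
Shapiro–Kostant–Steinberg property: for every `k ≥ 1`, the number of positive roots of
height `k` equals the number of exponents that are `≥ k`. -/
def IsExponents (e : Fin p → ℕ) : Prop :=
  ∀ k : ℕ, 1 ≤ k →
    {α ∈ RS.pos | RS.heightIs α k}.ncard = {i : Fin p | k ≤ e i}.ncard

/-- `h` is the Coxeter number of `W`, characterized by `#Δ = p·h`. -/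
def IsCoxeterNumber (h : ℕ) : Prop := RS.Δ.ncard = p * h

open Classical in
/-- `g` is the sum of the coefficients of the short simple roots in the expression
`θ = Σ cᵢ αᵢ` of the highest root. -/
def IsShortCoeffSum (g : ℕ) : Prop :=
  ∃ c : Fin p → ℕ, RS.θ = ∑ i, (c i : ℝ) • RS.simpleRoot i ∧
    (∑ i, if RS.IsShort (RS.simpleRoot i) then c i else 0) = g

open Classical in
/-- The number of constraints of the simplex
`D_max = {x | (x,αᵢ) ≤ 1 ∀i, (x,θ) ≥ 0}` that are active (hold with equality) at `x`;
for `x ∈ D_max` this is the codimension of the face of `D_max` containing `x`. -/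
noncomputable def dmaxFaceCodim (x : V) : ℕ :=
  {i : Fin p | ⟪x, RS.simpleRoot i⟫ = 1}.ncard + (if ⟪x, RS.θ⟫ = 0 then 1 else 0)

end RootSystemData


namespace RootSystemData

variable {V : Type*} [NormedAddCommGroup V] [InnerProductSpace ℝ V]
variable {p : ℕ} (RS : RootSystemData V p)

/-! ### Basis of simple roots, coordinates, heights -/

lemma natCombo_mem_span (x : V) (c : Fin p → ℕ)
    (hx : x = ∑ i, (c i : ℝ) • RS.simpleRoot i) :
    x ∈ Submodule.span ℝ (Set.range RS.simpleRoot) := by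
  subst hx
  exact Submodule.sum_mem _ fun i _ =>
    Submodule.smul_mem _ _ (Submodule.subset_span ⟨i, rfl⟩)

lemma mem_span_simple_of_pos {x : V} (hx : x ∈ RS.pos) :
    x ∈ Submodule.span ℝ (Set.range RS.simpleRoot) := by
  rw [RS.pos_def] at hx
  obtain ⟨-, c, hc⟩ := hx
  exact RS.natCombo_mem_span x c hc

lemma span_simple_top : Submodule.span ℝ (Set.range RS.simpleRoot) = ⊤ := by
  rw [eq_top_iff, ← RS.span_eq_top, Submodule.span_le]
  intro x hx
  rcases RS.pos_or_neg x hx with h | h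
  · exact RS.mem_span_simple_of_pos h
  · have := RS.mem_span_simple_of_pos h
    simpa using Submodule.neg_mem _ this

/-- The simple roots as a basis. -/
noncomputable def bas : Basis (Fin p) ℝ V :=
  Basis.mk RS.simpleRoot_indep (by rw [RS.span_simple_top])

lemma bas_eq (i : Fin p) : RS.bas i = RS.simpleRoot i := by
  simp [bas]

/-- The height linear functional. -/
noncomputable def htF : V →ₗ[ℝ] ℝ := ∑ i, RS.bas.coord i

lemma htF_simple (j : Fin p) : RS.htF (RS.simpleRoot j) = 1 := by
  rw [← RS.bas_eq]
  simp only [htF, LinearMap.coe_sum, Finset.sum_apply, Basis.coord_apply, Basis.repr_self]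
  rw [Finset.sum_eq_single j]
  · simp
  · intro b _ hb; simp [Finsupp.single_apply, Ne.symm hb]
  · simp

lemma htF_natCombo (c : Fin p → ℕ) :
    RS.htF (∑ i, (c i : ℝ) • RS.simpleRoot i) = ∑ i, (c i : ℝ) := by
  rw [map_sum]
  congr 1; ext i
  rw [map_smul, RS.htF_simple, smul_eq_mul, mul_one]

/-- `x` is a nonnegative-integer combination of the simple roots. -/
def NatC (x : V) : Prop := ∃ c : Fin p → ℕ, x = ∑ i, (c i : ℝ) • RS.simpleRoot i

lemma natC_add {x y : V} (hx : RS.NatC x) (hy : RS.NatC y) : RS.NatC (x + y) := by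
  obtain ⟨c, hc⟩ := hx; obtain ⟨d, hd⟩ := hy
  exact ⟨c + d, by simp [hc, hd, ← Finset.sum_add_distrib, add_smul]⟩

lemma natC_simple (i : Fin p) : RS.NatC (RS.simpleRoot i) := by
  refine ⟨fun j => if j = i then 1 else 0, ?_⟩
  rw [Finset.sum_eq_single i] <;> simp +contextual

lemma natC_htF_nonneg {x : V} (hx : RS.NatC x) : 0 ≤ RS.htF x := by
  obtain ⟨c, hc⟩ := hx
  rw [hc, RS.htF_natCombo]
  positivity

lemma natC_eq_zero_of_htF {x : V} (hx : RS.NatC x) (h : RS.htF x ≤ 0) : x = 0 := by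
  obtain ⟨c, hc⟩ := hx
  rw [hc, RS.htF_natCombo] at h
  have hc0 : ∀ i ∈ Finset.univ, (c i : ℝ) = 0 := by
    intro i _
    have h1 : ∀ i ∈ Finset.univ, (0:ℝ) ≤ (c i : ℝ) := fun i _ => Nat.cast_nonneg _
    have := Finset.sum_nonneg h1
    have h2 := (Finset.sum_eq_zero_iff_of_nonneg h1).mp (le_antisymm h this)
    exact h2 i (Finset.mem_univ i)
  rw [hc]
  apply Finset.sum_eq_zero
  intro i _
  rw [hc0 i (Finset.mem_univ i), zero_smul]

lemma natC_htF_pos {x : V} (hx : RS.NatC x) (h0 : x ≠ 0) : 1 ≤ RS.htF x := by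
  obtain ⟨c, hc⟩ := hx
  have : ∃ i, c i ≠ 0 := by
    by_contra h
    push_neg at h
    exact h0 (by simp [hc, h])
  obtain ⟨i, hi⟩ := this
  rw [hc, RS.htF_natCombo]
  calc (1:ℝ) ≤ (c i : ℝ) := by exact_mod_cast Nat.one_le_iff_ne_zero.mpr hi
  _ ≤ ∑ j, (c j : ℝ) :=
      Finset.single_le_sum (f := fun j => (c j : ℝ)) (fun j _ => Nat.cast_nonneg _)
        (Finset.mem_univ i)

lemma pos_natC {x : V} (hx : x ∈ RS.pos) : RS.NatC x := by
  rw [RS.pos_def] at hx; exact hx.2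

lemma pos_mem_delta {x : V} (hx : x ∈ RS.pos) : x ∈ RS.Δ := by
  rw [RS.pos_def] at hx; exact hx.1

lemma mem_pos_of_natC {x : V} (hx : x ∈ RS.Δ) (hn : RS.NatC x) : x ∈ RS.pos := by
  rw [RS.pos_def]; exact ⟨hx, hn⟩

lemma pos_ne_zero {x : V} (hx : x ∈ RS.pos) : x ≠ 0 :=
  fun h => RS.zero_notMem (h ▸ RS.pos_mem_delta hx)

lemma pos_htF {x : V} (hx : x ∈ RS.pos) : 1 ≤ RS.htF x :=
  RS.natC_htF_pos (RS.pos_natC hx) (RS.pos_ne_zero hx)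

lemma not_pos_neg {x : V} (hx : x ∈ RS.pos) : ¬ (-x ∈ RS.pos) := by
  intro h
  have h1 := RS.natC_htF_nonneg (RS.pos_natC h)
  have h2 := RS.pos_htF hx
  rw [map_neg] at h1
  linarith

/-- Trichotomy for roots. -/
lemma root_tri {x : V} (hx : x ∈ RS.Δ) : x ∈ RS.pos ∨ -x ∈ RS.pos := RS.pos_or_neg x hx

lemma pos_add_pos_mem {x y : V} (hx : x ∈ RS.pos) (hy : y ∈ RS.pos)
    (hxy : x + y ∈ RS.Δ) : x + y ∈ RS.pos :=
  RS.mem_pos_of_natC hxy (RS.natC_add (RS.pos_natC hx) (RS.pos_natC hy))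

lemma htF_le_theta {x : V} (hx : x ∈ RS.pos) : RS.htF x ≤ RS.htF RS.θ := by
  obtain ⟨c, hc⟩ := RS.θ_highest x hx
  have : RS.htF RS.θ = RS.htF x + RS.htF (∑ i, (c i : ℝ) • RS.simpleRoot i) := by
    rw [hc, map_add]
  rw [this]
  have := RS.natC_htF_nonneg (x := ∑ i, (c i : ℝ) • RS.simpleRoot i) ⟨c, rfl⟩
  linarith

lemma htF_root_lower {x : V} (hx : x ∈ RS.Δ) : -RS.htF RS.θ ≤ RS.htF x := by
  rcases RS.root_tri hx with h | h
  · have := RS.pos_htF h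
    have h2 : (0:ℝ) ≤ RS.htF RS.θ := le_trans (by norm_num) (RS.pos_htF RS.θ_mem)
    linarith
  · have := RS.htF_le_theta h
    rw [map_neg] at this
    linarith

lemma theta_pos : RS.θ ∈ RS.pos := RS.θ_mem

lemma rootLe_of_pos_diff {x y : V} (h : RS.NatC (y - x)) : RS.rootLe x y := by
  obtain ⟨c, hc⟩ := h
  exact ⟨c, by rw [← hc]; abel⟩

end RootSystemData
namespace RootSystemData

variable {V : Type*} [NormedAddCommGroup V] [InnerProductSpace ℝ V]
variable {p : ℕ} (RS : RootSystemData V p)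

/-! ### Reflections, the Weyl group, the coroot lattice -/

lemma sRefl_apply (α x : V) : sRefl α x = x - (2 * ⟪α, x⟫ / ⟪α, α⟫) • α := rfl

lemma sRefl_inner (α : V) (x y : V) : ⟪sRefl α x, sRefl α y⟫ = ⟪x, y⟫ := by
  by_cases h : α = 0
  · simp [sRefl_apply, h]
  · have hs : ⟪α, α⟫ ≠ 0 := inner_self_ne_zero.mpr h
    simp only [sRefl_apply, inner_sub_left, inner_sub_right, real_inner_smul_left,
      real_inner_smul_right]
    rw [real_inner_comm x α]
    field_simp
    ring

lemma sRefl_symm (α : V) : (sRefl α).symm = sRefl α := rfl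

def WeylNice (v : V ≃ₗ[ℝ] V) : Prop :=
  (∀ x y : V, ⟪v x, v y⟫ = ⟪x, y⟫) ∧ (∀ β ∈ RS.Δ, v β ∈ RS.Δ) ∧
    (∀ β ∈ RS.Δ, v.symm β ∈ RS.Δ)

lemma weylNice (v : V ≃ₗ[ℝ] V) (hv : v ∈ RS.weylGroup) : RS.WeylNice v := by
  induction hv using Subgroup.closure_induction with
  | mem w hw =>
    obtain ⟨α, hα, rfl⟩ := hw
    refine ⟨sRefl_inner α, fun β hβ => RS.reflect_mem α hα β hβ, fun β hβ => ?_⟩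
    rw [sRefl_symm]
    exact RS.reflect_mem α hα β hβ
  | one => exact ⟨fun x y => rfl, fun β hβ => hβ, fun β hβ => hβ⟩
  | mul g h hg hh ihg ihh =>
    refine ⟨fun x y => ?_, fun β hβ => ?_, fun β hβ => ?_⟩
    · exact (ihg.1 (h x) (h y)).trans (ihh.1 x y)
    · exact ihg.2.1 _ (ihh.2.1 β hβ)
    · exact ihh.2.2 _ (ihg.2.2 β hβ)
  | inv g hg ihg =>
    refine ⟨fun x y => ?_, ihg.2.2, ihg.2.1⟩
    have := ihg.1 (g.symm x) (g.symm y)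
    simp only [LinearEquiv.apply_symm_apply] at this
    exact this.symm

lemma root_nonzero {β : V} (hβ : β ∈ RS.Δ) : β ≠ 0 := fun h => RS.zero_notMem (h ▸ hβ)

lemma inner_self_pos_of_root {β : V} (hβ : β ∈ RS.Δ) : 0 < ⟪β, β⟫ := by
  have h : ⟪β, β⟫ ≠ 0 := inner_self_ne_zero.mpr (RS.root_nonzero hβ)
  have h2 : (0:ℝ) ≤ ⟪β, β⟫ := real_inner_self_nonneg
  exact lt_of_le_of_ne h2 (Ne.symm h)

lemma coroot_int (r : V) (hr : r ∈ RS.corootLattice) :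
    ∀ β ∈ RS.Δ, ∃ n : ℤ, ⟪β, r⟫ = (n : ℝ) := by
  induction hr using AddSubgroup.closure_induction with
  | mem w hw =>
    obtain ⟨α, hα, rfl⟩ := hw
    intro β hβ
    obtain ⟨n, hn⟩ := RS.crystallographic α hα β hβ
    refine ⟨n, ?_⟩
    rw [corootVec, real_inner_smul_right, real_inner_comm α β, ← hn]
    have : ⟪α, α⟫ ≠ 0 := inner_self_ne_zero.mpr (RS.root_nonzero hα)
    field_simp
  | zero => exact fun β _ => ⟨0, by simp⟩
  | add g h _ _ ihg ihh =>
    intro β hβ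
    obtain ⟨n, hn⟩ := ihg β hβ; obtain ⟨m, hm⟩ := ihh β hβ
    exact ⟨n + m, by rw [inner_add_right, hn, hm]; push_cast; ring⟩
  | neg g _ ihg =>
    intro β hβ
    obtain ⟨n, hn⟩ := ihg β hβ
    exact ⟨-n, by rw [inner_neg_right, hn]; push_cast; ring⟩

/-! ### Root subtraction/addition lemmas -/


lemma neg_mem_delta {β : V} (hβ : β ∈ RS.Δ) : -β ∈ RS.Δ := RS.neg_mem β hβ

/-- **F1**: if two distinct roots have positive inner product, their difference is a
root. -/
lemma root_sub_mem {β γ : V} (hβ : β ∈ RS.Δ) (hγ : γ ∈ RS.Δ)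
    (hip : 0 < ⟪β, γ⟫) (hne : β ≠ γ) : β - γ ∈ RS.Δ := by
  obtain ⟨n, hn⟩ := RS.crystallographic β hβ γ hγ
  obtain ⟨m, hm⟩ := RS.crystallographic γ hγ β hβ
  rw [real_inner_comm β γ] at hm
  have hββ := RS.inner_self_pos_of_root hβ
  have hγγ := RS.inner_self_pos_of_root hγ
  have hn1 : 1 ≤ n := by
    have : (0:ℝ) < n := by rw [← hn]; positivity
    exact_mod_cast this
  have hm1 : 1 ≤ m := by
    have : (0:ℝ) < m := by rw [← hm]; positivity
    exact_mod_cast this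
  rcases eq_or_lt_of_le hm1 with hm2 | hm2
  · -- sRefl γ β = β - γ
    have := RS.reflect_mem γ hγ β hβ
    rw [sRefl_apply, real_inner_comm β γ] at this
    have hco : 2 * ⟪β, γ⟫ / ⟪γ, γ⟫ = (1:ℝ) := by rw [hm, ← hm2]; norm_num
    rwa [hco, one_smul] at this
  rcases eq_or_lt_of_le hn1 with hn2 | hn2
  · have := RS.reflect_mem β hβ γ hγ
    rw [sRefl_apply] at this
    have hco : 2 * ⟪β, γ⟫ / ⟪β, β⟫ = (1:ℝ) := by rw [hn, ← hn2]; norm_num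
    rw [hco, one_smul] at this
    have := RS.neg_mem _ this
    simpa using this
  · -- n, m ≥ 2 : Cauchy-Schwarz equality, contradiction
    exfalso
    have hcs := real_inner_mul_inner_self_le β γ
    have hnm : (n : ℝ) * m ≤ 4 := by
      rw [← hn, ← hm]
      rw [div_mul_div_comm]
      rw [div_le_iff₀ (by positivity)]
      nlinarith [hcs]
    have hn2' : (2:ℤ) ≤ n := hn2
    have hm2' : (2:ℤ) ≤ m := hm2
    have h4 : (n:ℝ) * m = 4 := by
      have : (4:ℝ) ≤ (n:ℝ) * m := by
        have := mul_le_mul (by exact_mod_cast hn2' : (2:ℝ) ≤ n)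
          (by exact_mod_cast hm2' : (2:ℝ) ≤ m) (by norm_num) (by positivity)
        linarith
      linarith
    -- equality in CS
    have heq : ⟪β, γ⟫ * ⟪β, γ⟫ = ⟪β, β⟫ * ⟪γ, γ⟫ := by
      have e1 : (n:ℝ) = 2 * ⟪β, γ⟫ / ⟪β, β⟫ := hn.symm
      have e2 : (m:ℝ) = 2 * ⟪β, γ⟫ / ⟪γ, γ⟫ := hm.symm
      rw [e1, e2, div_mul_div_comm] at h4
      field_simp at h4
      nlinarith [h4]
    have hnorm : ⟪β, γ⟫ = ‖β‖ * ‖γ‖ := by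
      have h1 : ⟪β, β⟫ = ‖β‖ * ‖β‖ := real_inner_self_eq_norm_mul_norm β
      have h2 : ⟪γ, γ⟫ = ‖γ‖ * ‖γ‖ := real_inner_self_eq_norm_mul_norm γ
      rw [h1, h2] at heq
      have hfac : (⟪β, γ⟫ - ‖β‖ * ‖γ‖) * (⟪β, γ⟫ + ‖β‖ * ‖γ‖) = 0 := by nlinarith [heq]
      rcases mul_eq_zero.mp hfac with h | h
      · linarith
      · nlinarith [mul_nonneg (norm_nonneg β) (norm_nonneg γ), hip]
    have hdep := inner_eq_norm_mul_iff_real.mp hnorm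
    -- ‖γ‖ • β = ‖β‖ • γ
    have hβ0 : β ≠ 0 := RS.root_nonzero hβ
    have hnβ : (0:ℝ) < ‖β‖ := norm_pos_iff.mpr hβ0
    have hγc : γ = (‖γ‖ / ‖β‖) • β := by
      have h := congrArg (fun z => (‖β‖)⁻¹ • z) hdep
      simp only [smul_smul] at h
      rw [inv_mul_cancel₀ (ne_of_gt hnβ), one_smul] at h
      rw [div_eq_inv_mul]
      exact h.symm
    have hc := RS.reduced β hβ (‖γ‖ / ‖β‖) (by rw [← hγc]; exact hγ)
    have hγ0 : γ ≠ 0 := RS.root_nonzero hγ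
    have hnγ : (0:ℝ) < ‖γ‖ := norm_pos_iff.mpr hγ0
    rcases hc with hc | hc
    · apply hne
      rw [hγc, hc, one_smul]
    · have : (0:ℝ) < ‖γ‖ / ‖β‖ := by positivity
      rw [hc] at this; norm_num at this

lemma root_add_mem {β γ : V} (hβ : β ∈ RS.Δ) (hγ : γ ∈ RS.Δ)
    (hip : ⟪β, γ⟫ < 0) (hne : β ≠ -γ) : β + γ ∈ RS.Δ := by
  have := RS.root_sub_mem hβ (RS.neg_mem_delta hγ) (by rwa [inner_neg_right, neg_pos]) hne
  simpa using this

lemma pos_add_of_inner_neg {β γ : V} (hβ : β ∈ RS.pos) (hγ : γ ∈ RS.pos)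
    (hip : ⟪β, γ⟫ < 0) : β + γ ∈ RS.pos := by
  have hne : β ≠ -γ := by
    intro h
    exact RS.not_pos_neg hγ (h ▸ hβ)
  exact RS.pos_add_pos_mem hβ hγ
    (RS.root_add_mem (RS.pos_mem_delta hβ) (RS.pos_mem_delta hγ) hip hne)

/-- **F2**: descent of a non-simple positive root by a simple root. -/
lemma f2 {ρ : V} (hρ : ρ ∈ RS.pos) (hns : ∀ i, ρ ≠ RS.simpleRoot i) :
    ∃ j, 0 < ⟪ρ, RS.simpleRoot j⟫ ∧ ρ - RS.simpleRoot j ∈ RS.pos := by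
  obtain ⟨c, hc⟩ := RS.pos_natC hρ
  have hsum : ⟪ρ, ρ⟫ = ∑ i, (c i : ℝ) * ⟪ρ, RS.simpleRoot i⟫ := by
    calc ⟪ρ, ρ⟫ = ⟪ρ, ∑ i, (c i : ℝ) • RS.simpleRoot i⟫ := by rw [← hc]
    _ = ∑ i, (c i : ℝ) * ⟪ρ, RS.simpleRoot i⟫ := by
        rw [inner_sum]
        exact Finset.sum_congr rfl fun i _ => real_inner_smul_right _ _ _
  have hpos : 0 < ⟪ρ, ρ⟫ := RS.inner_self_pos_of_root (RS.pos_mem_delta hρ)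
  have : ∃ j, 0 < (c j : ℝ) * ⟪ρ, RS.simpleRoot j⟫ := by
    by_contra h
    push_neg at h
    have : ⟪ρ, ρ⟫ ≤ 0 := by
      rw [hsum]; exact Finset.sum_nonpos fun j _ => h j
    linarith
  obtain ⟨j, hj⟩ := this
  have hipj : 0 < ⟪ρ, RS.simpleRoot j⟫ := by
    rcases lt_trichotomy (⟪ρ, RS.simpleRoot j⟫) 0 with h | h | h
    · nlinarith [Nat.cast_nonneg (α := ℝ) (c j)]
    · rw [h] at hj; norm_num at hj
    · exact h
  have hsub : ρ - RS.simpleRoot j ∈ RS.Δ :=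
    RS.root_sub_mem (RS.pos_mem_delta hρ) (RS.simpleRoot_mem j) hipj (hns j)
  refine ⟨j, hipj, ?_⟩
  rcases RS.root_tri hsub with h | h
  · exact h
  · exfalso
    have h1 : RS.simpleRoot j = ρ + (RS.simpleRoot j - ρ) := by abel
    have h2 : RS.htF (RS.simpleRoot j) = RS.htF ρ + RS.htF (RS.simpleRoot j - ρ) := by
      have := congrArg RS.htF h1
      rwa [map_add] at this
    have h3 : 1 ≤ RS.htF (RS.simpleRoot j - ρ) := by
      have := RS.pos_htF h
      rwa [show -(ρ - RS.simpleRoot j) = RS.simpleRoot j - ρ by abel] at this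
    have h4 := RS.pos_htF hρ
    rw [RS.htF_simple] at h2
    linarith

end RootSystemData
namespace RootSystemData

variable {V : Type*} [NormedAddCommGroup V] [InnerProductSpace ℝ V]
variable {p : ℕ} (RS : RootSystemData V p)

/-! ### Small helpers -/

lemma simple_pos (i : Fin p) : RS.simpleRoot i ∈ RS.pos :=
  RS.mem_pos_of_natC (RS.simpleRoot_mem i) (RS.natC_simple i)

lemma pos_add_ne_zero {u w : V} (hu : u ∈ RS.pos) (hw : w ∈ RS.pos) : u + w ≠ 0 := by
  intro h
  have h1 := RS.pos_htF hu
  have h2 := RS.pos_htF hw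
  have : RS.htF (u + w) = 0 := by rw [h, map_zero]
  rw [map_add] at this
  linarith

lemma ne_of_sub_eq_pos_add {a b u w : V} (h : a - b = u + w)
    (hu : u ∈ RS.pos) (hw : w ∈ RS.pos) : a ≠ b := by
  intro he
  rw [he, sub_self] at h
  exact RS.pos_add_ne_zero hu hw h.symm

lemma ht_root_le_theta {γ : V} (hγ : γ ∈ RS.Δ) : RS.htF γ ≤ RS.htF RS.θ := by
  rcases RS.root_tri hγ with h | h
  · exact RS.htF_le_theta h
  · have h1 := RS.pos_htF h
    have h2 := le_trans (by norm_num) (RS.pos_htF RS.θ_mem) (α := ℝ) (a := 0)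
    rw [map_neg] at h1
    linarith

lemma theta_ne_of_lt_ht {γ : V} (h : RS.htF γ < RS.htF RS.θ) : γ ≠ RS.θ := by
  intro he; rw [he] at h; exact lt_irrefl _ h

/-- integer gap lemmas -/
lemma int_le_neg_one {t : ℝ} (h : ∃ k : ℤ, t = (k:ℝ)) (ht : t < 0) : t ≤ -1 := by
  obtain ⟨k, rfl⟩ := h
  have : k < 0 := by exact_mod_cast ht
  have : k ≤ -1 := by omega
  exact_mod_cast this

lemma int_ge_one {t : ℝ} (h : ∃ k : ℤ, t = (k:ℝ)) (ht : 0 < t) : 1 ≤ t := by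
  obtain ⟨k, rfl⟩ := h
  have : 0 < k := by exact_mod_cast ht
  have : 1 ≤ k := by omega
  exact_mod_cast this

lemma int_ge_two {t : ℝ} (h : ∃ k : ℤ, t = (k:ℝ)) (ht : 1 < t) : 2 ≤ t := by
  obtain ⟨k, rfl⟩ := h
  have : 1 < k := by exact_mod_cast ht
  have : 2 ≤ k := by omega
  exact_mod_cast this

lemma int_three_cases {t : ℝ} (h : ∃ k : ℤ, t = (k:ℝ)) (ht : t ≤ 1) :
    t = 1 ∨ t = 0 ∨ t ≤ -1 := by
  obtain ⟨k, rfl⟩ := h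
  have hk : k ≤ 1 := by exact_mod_cast ht
  rcases lt_trichotomy k 0 with h | h | h
  · right; right
    have : k ≤ -1 := by omega
    exact_mod_cast this
  · right; left; exact_mod_cast h
  · left
    have : k = 1 := by omega
    exact_mod_cast this

lemma eq_one_of_int {t : ℝ} (h : ∃ k : ℤ, t = (k:ℝ)) (h1 : 1 ≤ t) (h2 : ¬ 2 ≤ t) :
    t = 1 := by
  obtain ⟨k, rfl⟩ := h
  have hk1 : 1 ≤ k := by exact_mod_cast h1
  have hk2 : ¬ (2:ℝ) ≤ (k:ℝ) := h2
  have : k < 2 := by by_contra h3; exact hk2 (by exact_mod_cast not_lt.mp h3)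
  have : k = 1 := by omega
  exact_mod_cast this

/-- **AF2**: ascent for the affine root `δ - γ`. -/
lemma af2 {γ : V} (hγ : γ ∈ RS.pos) (hne : γ ≠ RS.θ) :
    (∃ j, ⟪γ, RS.simpleRoot j⟫ < 0 ∧ γ + RS.simpleRoot j ∈ RS.pos) ∨
      (0 < ⟪γ, RS.θ⟫ ∧ RS.θ - γ ∈ RS.pos) := by
  obtain ⟨c, hc⟩ := RS.θ_highest γ hγ
  by_cases hip : 0 < ⟪γ, RS.θ⟫
  · right
    refine ⟨hip, ?_⟩
    have hsub : RS.θ - γ ∈ RS.Δ := by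
      have := RS.root_sub_mem (RS.pos_mem_delta RS.θ_mem) (RS.pos_mem_delta hγ)
        (by rwa [real_inner_comm γ RS.θ]) (Ne.symm hne)
      exact this
    refine RS.mem_pos_of_natC hsub ⟨c, ?_⟩
    rw [hc]; abel
  · left
    push_neg at hip
    have hθγ : ⟪γ, RS.θ⟫ = ⟪γ, γ⟫ + ∑ i, (c i : ℝ) * ⟪γ, RS.simpleRoot i⟫ := by
      calc ⟪γ, RS.θ⟫ = ⟪γ, γ + ∑ i, (c i : ℝ) • RS.simpleRoot i⟫ := by rw [← hc]
      _ = ⟪γ, γ⟫ + ∑ i, (c i : ℝ) * ⟪γ, RS.simpleRoot i⟫ := by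
          rw [inner_add_right, inner_sum]
          congr 1
          exact Finset.sum_congr rfl fun i _ => real_inner_smul_right _ _ _
    have hγγ := RS.inner_self_pos_of_root (RS.pos_mem_delta hγ)
    have : ∃ j, (c j : ℝ) * ⟪γ, RS.simpleRoot j⟫ < 0 := by
      by_contra h
      push_neg at h
      have : (0:ℝ) ≤ ∑ i, (c i : ℝ) * ⟪γ, RS.simpleRoot i⟫ :=
        Finset.sum_nonneg fun i _ => h i
      linarith
    obtain ⟨j, hj⟩ := this
    have hipj : ⟪γ, RS.simpleRoot j⟫ < 0 := by
      by_contra h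
      push_neg at h
      nlinarith [Nat.cast_nonneg (α := ℝ) (c j)]
    exact ⟨j, hipj, RS.pos_add_of_inner_neg hγ (RS.simple_pos j) hipj⟩

end RootSystemData
namespace RootSystemData

variable {V : Type*} [NormedAddCommGroup V] [InnerProductSpace ℝ V]
variable {p : ℕ} (RS : RootSystemData V p)

/-- a splitting of `ρ` with a value-one positive part -/
def SplitP (x ρ : V) : Prop :=
  ∃ σ τ : V, σ ∈ RS.pos ∧ τ ∈ RS.pos ∧ ρ = σ + τ ∧ ⟪σ, x⟫ = 1

/-- the raising conclusion -/
def ACP (x g : V) : Prop :=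
  ∃ κ : V, κ ∈ RS.pos ∧ g + κ ∈ RS.Δ ∧ (⟪κ, x⟫ = 1 ∨ ⟪g + κ, x⟫ = 0)

lemma htF_ge_two {ρ : V} (hρ : ρ ∈ RS.pos) (hns : ∀ i, ρ ≠ RS.simpleRoot i) :
    2 ≤ RS.htF ρ := by
  obtain ⟨c, hc⟩ := RS.pos_natC hρ
  have hval : RS.htF ρ = ((∑ i, c i : ℕ) : ℝ) := by
    rw [hc, RS.htF_natCombo]; push_cast; rfl
  have h2 : 2 ≤ ∑ i, c i := by
    by_contra h
    push_neg at h
    rcases (by omega : (∑ i, c i) = 0 ∨ (∑ i, c i) = 1) with h0 | h1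
    · have hz : ∀ i ∈ Finset.univ, c i = 0 := Finset.sum_eq_zero_iff.mp h0
      apply RS.pos_ne_zero hρ
      rw [hc]
      apply Finset.sum_eq_zero
      intro i _
      rw [hz i (Finset.mem_univ i)]; simp
    · have hex : ∃ j, c j ≠ 0 := by
        by_contra hno
        push_neg at hno
        rw [Finset.sum_eq_zero (fun i _ => hno i)] at h1
        omega
      obtain ⟨j, hj⟩ := hex
      have hle : c j ≤ ∑ i, c i :=
        Finset.single_le_sum (f := c) (fun i _ => Nat.zero_le _) (Finset.mem_univ j)
      have hcj : c j = 1 := by omega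
      have hck : ∀ k, k ≠ j → c k = 0 := by
        intro k hk
        have hsub : ({j, k} : Finset (Fin p)) ⊆ Finset.univ := Finset.subset_univ _
        have h2 := Finset.sum_le_sum_of_subset (f := c) hsub
        rw [Finset.sum_pair (Ne.symm hk)] at h2
        omega
      apply hns j
      rw [hc, Finset.sum_eq_single j]
      · rw [hcj]; simp
      · intro k _ hk; rw [hck k hk]; simp
      · intro h; exact absurd (Finset.mem_univ j) h
  rw [hval]
  exact_mod_cast h2

section Combin

variable (x : V)

set_option maxHeartbeats 4000000 in
lemma master (hs1 : ∀ i, ⟪RS.simpleRoot i, x⟫ ≤ 1) (hθ0 : 0 ≤ ⟪RS.θ, x⟫)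
    (hint : ∀ γ ∈ RS.Δ, ∃ k : ℤ, ⟪γ, x⟫ = (k : ℝ)) (n : ℕ) :
    (∀ ρ ∈ RS.pos, 2 * RS.htF ρ ≤ (n:ℝ) → 2 ≤ ⟪ρ, x⟫ → RS.SplitP x ρ) ∧
    (∀ h c : V, h ∈ RS.pos → c ∈ RS.pos → h + c ∈ RS.pos → ⟪h, x⟫ ≤ 0 →
      2 ≤ ⟪c, x⟫ → 2 * RS.htF c + 1 ≤ (n:ℝ) → RS.SplitP x (h + c)) ∧
    (∀ γ ∈ RS.pos, ⟪γ, x⟫ ≤ -1 →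
      2 * (RS.htF RS.θ - RS.htF γ + 1) ≤ (n:ℝ) → RS.ACP x γ) ∧
    (∀ e c : V, e ∈ RS.pos → c ∈ RS.pos → e - c ∈ RS.pos → 1 ≤ ⟪e, x⟫ →
      2 ≤ ⟪c, x⟫ → 2 * RS.htF c + 1 ≤ (n:ℝ) → RS.ACP x (e - c)) ∧
    (∀ h f : V, h ∈ RS.pos → f ∈ RS.pos → f - h ∈ RS.pos → ⟪h, x⟫ ≤ 0 →
      ⟪f, x⟫ ≤ -1 → 2 * (RS.htF RS.θ - RS.htF f + 1) + 1 ≤ (n:ℝ) → RS.ACP x (f - h)) := by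
  induction n using Nat.strong_induction_on with
  | _ n ih =>
  refine ⟨?_, ?_, ?_, ?_, ?_⟩
  · -- H1: splitting a positive root of value ≥ 2
    intro ρ hρ hm hv
    have hρΔ := RS.pos_mem_delta hρ
    have hns : ∀ i, ρ ≠ RS.simpleRoot i := by
      intro i he
      have := hs1 i
      rw [← he] at this
      linarith
    have hht2 := RS.htF_ge_two hρ hns
    have hn4 : 4 ≤ (n:ℝ) := by linarith
    have hn1 : 1 ≤ n := by exact_mod_cast (by linarith : (1:ℝ) ≤ (n:ℝ))
    obtain ⟨j, hipj, hz⟩ := RS.f2 hρ hns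
    set β := RS.simpleRoot j with hβdef
    set ζ := ρ - β with hζdef
    have hρeq : ρ = β + ζ := by rw [hζdef]; abel
    have hζval : ⟪ζ, x⟫ = ⟪ρ, x⟫ - ⟪β, x⟫ := by rw [hζdef, inner_sub_left]
    have hβ1 : ⟪β, x⟫ ≤ 1 := hs1 j
    have hβpos := RS.simple_pos j
    rcases int_three_cases (hint β (RS.simpleRoot_mem j)) hβ1 with hb | hb | hb
    · exact ⟨β, ζ, hβpos, hz, hρeq, hb⟩
    all_goals {
    -- b = 0 or b ≤ -1 : split ζ recursively
    have hζv2 : 2 ≤ ⟪ζ, x⟫ := by rw [hζval]; linarith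
    have hhtζ : RS.htF ζ = RS.htF ρ - 1 := by
      rw [hζdef, map_sub, RS.htF_simple]
    have H1' := (ih (n-1) (by omega)).1
    have H2' := (ih (n-1) (by omega)).2.1
    have hcast : ((n-1 : ℕ):ℝ) = (n:ℝ) - 1 := by
      push_cast [hn1]; ring
    obtain ⟨cp, S, hcp, hS, hζsplit, hcpv⟩ :=
      H1' ζ hz (by rw [hcast, hhtζ]; linarith) hζv2
    have hcpΔ := RS.pos_mem_delta hcp
    have hSΔ := RS.pos_mem_delta hS
    have hρeq2 : ρ = β + (cp + S) := by rw [← hζsplit]; exact hρeq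
    have hSval : ⟪S, x⟫ = ⟪ρ, x⟫ - ⟪β, x⟫ - 1 := by
      have : ⟪ζ, x⟫ = ⟪cp, x⟫ + ⟪S, x⟫ := by rw [hζsplit, inner_add_left]
      linarith [hζval]
    by_cases hρcp : 0 < ⟪ρ, cp⟫
    · have hne : ρ ≠ cp := fun he => by rw [he, hcpv] at hv; linarith
      have hsub : ρ - cp ∈ RS.Δ := RS.root_sub_mem hρΔ hcpΔ hρcp hne
      have heq2 : ρ - cp = β + S := by rw [hρeq2]; abel
      have hposr : ρ - cp ∈ RS.pos := by
        rw [heq2]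
        exact RS.mem_pos_of_natC (heq2 ▸ hsub)
          (RS.natC_add (RS.natC_simple j) (RS.pos_natC hS))
      exact ⟨cp, ρ - cp, hcp, hposr, by abel, hcpv⟩
    · push_neg at hρcp
      by_cases hρS : 0 < ⟪ρ, S⟫
      · have hhtS : RS.htF S ≤ RS.htF ρ - 2 := by
          have h1 : RS.htF ζ = RS.htF cp + RS.htF S := by rw [hζsplit, map_add]
          have h2 := RS.pos_htF hcp
          linarith
        have hne : ρ ≠ S := by
          intro he
          rw [he] at hhtS
          have := RS.pos_htF hS
          linarith
        have hsub : ρ - S ∈ RS.Δ := RS.root_sub_mem hρΔ hSΔ hρS hne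
        have heq2 : ρ - S = β + cp := by rw [hρeq2]; abel
        have hposr : ρ - S ∈ RS.pos := by
          rw [heq2]
          exact RS.mem_pos_of_natC (heq2 ▸ hsub)
            (RS.natC_add (RS.natC_simple j) (RS.pos_natC hcp))
        have hrv : ⟪ρ - S, x⟫ = ⟪β, x⟫ + 1 := by
          rw [inner_sub_left]; linarith
        first
        | -- b = 0 : value of ρ - S is 1, use it as the value-one part
          exact ⟨ρ - S, S, hposr, hS, by abel, by rw [hrv, hb]; norm_num⟩
        | -- b ≤ -1 : recurse into H2 (ρ-S, S)
          (refine (?_ : RS.SplitP x ((ρ - S) + S)).imp fun σ h => ?_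
           · refine H2' (ρ - S) S hposr hS (by rw [show ρ - S + S = ρ by abel]; exact hρ)
               (by rw [hrv]; linarith) (by linarith [hSval]) ?_
             have hhtS : RS.htF S ≤ RS.htF ρ - 2 := by
               have h1 : RS.htF ζ = RS.htF cp + RS.htF S := by rw [hζsplit, map_add]
               have h2 := RS.pos_htF hcp
               linarith
             rw [hcast]
             linarith
           · rwa [show ρ - S + S = ρ by abel] at h)
      · push_neg at hρS
        have hζζ := RS.inner_self_pos_of_root (RS.pos_mem_delta hz)
        have hβζ : ⟪β, ζ⟫ < 0 := by
          have h1 : ⟪ρ, ζ⟫ = ⟪β, ζ⟫ + ⟪ζ, ζ⟫ := by rw [hρeq, inner_add_left]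
          have h2 : ⟪ρ, ζ⟫ = ⟪ρ, cp⟫ + ⟪ρ, S⟫ := by rw [hζsplit, inner_add_right]
          linarith
        by_cases hβcp : ⟪β, cp⟫ < 0
        · have hr : β + cp ∈ RS.pos := RS.pos_add_of_inner_neg hβpos hcp hβcp
          have hrv : ⟪β + cp, x⟫ = ⟪β, x⟫ + 1 := by rw [inner_add_left, hcpv]
          first
          | exact ⟨β + cp, S, hr, hS, by rw [hρeq2]; abel, by rw [hrv, hb]; norm_num⟩
          | (refine (?_ : RS.SplitP x ((β + cp) + S)).imp fun σ h => ?_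
             · refine H2' (β + cp) S hr hS
                 (by rw [show β + cp + S = ρ by rw [hρeq2]; abel]; exact hρ)
                 (by rw [hrv]; linarith) (by linarith [hSval]) ?_
               have hhtS : RS.htF S ≤ RS.htF ρ - 2 := by
                 have h1 : RS.htF ζ = RS.htF cp + RS.htF S := by rw [hζsplit, map_add]
                 have h2 := RS.pos_htF hcp
                 linarith
               rw [hcast]
               linarith
             · rwa [show β + cp + S = ρ by rw [hρeq2]; abel] at h)
        · push_neg at hβcp
          have hβS : ⟪β, S⟫ < 0 := by
            have : ⟪β, ζ⟫ = ⟪β, cp⟫ + ⟪β, S⟫ := by rw [hζsplit, inner_add_right]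
            linarith
          have hr : β + S ∈ RS.pos := RS.pos_add_of_inner_neg hβpos hS hβS
          exact ⟨cp, β + S, hcp, hr, by rw [hρeq2]; abel, hcpv⟩ }
  · -- H2
    intro h c hh hc hhc hhv hcv hm
    have hcΔ := RS.pos_mem_delta hc
    have hhΔ := RS.pos_mem_delta hh
    have hρΔ := RS.pos_mem_delta hhc
    have hcns : ∀ i, c ≠ RS.simpleRoot i := by
      intro i he
      have := hs1 i
      rw [← he] at this
      linarith
    have hht2 := RS.htF_ge_two hc hcns
    have hn1 : 1 ≤ n := by exact_mod_cast (by linarith : (1:ℝ) ≤ (n:ℝ))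
    have hcast : ((n-1 : ℕ):ℝ) = (n:ℝ) - 1 := by push_cast [hn1]; ring
    have H1' := (ih (n-1) (by omega)).1
    have H2' := (ih (n-1) (by omega)).2.1
    obtain ⟨cp, S, hcp, hS, hcsplit, hcpv⟩ :=
      H1' c hc (by rw [hcast]; linarith) hcv
    have hcpΔ := RS.pos_mem_delta hcp
    have hSΔ := RS.pos_mem_delta hS
    have hSv : ⟪S, x⟫ = ⟪c, x⟫ - 1 := by
      have : ⟪c, x⟫ = ⟪cp, x⟫ + ⟪S, x⟫ := by rw [hcsplit, inner_add_left]
      linarith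
    have hSv1 : 1 ≤ ⟪S, x⟫ := by linarith
    have hhS_nat := RS.natC_add (RS.pos_natC hh) (RS.pos_natC hS)
    have hhcp_nat := RS.natC_add (RS.pos_natC hh) (RS.pos_natC hcp)
    have hhtS : RS.htF S ≤ RS.htF c - 1 := by
      have h1 : RS.htF c = RS.htF cp + RS.htF S := by rw [hcsplit, map_add]
      have h2 := RS.pos_htF hcp
      linarith
    have hhv0 : ⟪h, x⟫ = 0 ∨ ⟪h, x⟫ ≤ -1 := by
      rcases int_three_cases (hint h hhΔ) (by linarith) with h' | h' | h'
      · exfalso; linarith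
      · exact Or.inl h'
      · exact Or.inr h'
    by_cases h1 : 0 < ⟪h + c, cp⟫
    · have heq2 : (h + c) - cp = h + S := by rw [hcsplit]; abel
      have hne : h + c ≠ cp := RS.ne_of_sub_eq_pos_add heq2 hh hS
      have hsub := RS.root_sub_mem hρΔ hcpΔ h1 hne
      rw [heq2] at hsub
      exact ⟨cp, h + S, hcp, RS.mem_pos_of_natC hsub hhS_nat,
        by rw [hcsplit]; abel, hcpv⟩
    · by_cases h2 : 0 < ⟪h + c, S⟫
      · have heq2 : (h + c) - S = h + cp := by rw [hcsplit]; abel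
        have hne : h + c ≠ S := RS.ne_of_sub_eq_pos_add heq2 hh hcp
        have hsub := RS.root_sub_mem hρΔ hSΔ h2 hne
        rw [heq2] at hsub
        have hposT : h + cp ∈ RS.pos := RS.mem_pos_of_natC hsub hhcp_nat
        have hTv : ⟪h + cp, x⟫ = ⟪h, x⟫ + 1 := by rw [inner_add_left, hcpv]
        rcases hhv0 with hh0 | hh0
        · exact ⟨h + cp, S, hposT, hS, by rw [hcsplit]; abel,
            by rw [hTv, hh0]; norm_num⟩
        · by_cases hS2 : 2 ≤ ⟪S, x⟫
          · have := H2' (h + cp) S hposT hS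
              (by rw [show h + cp + S = h + c by rw [hcsplit]; abel]; exact hhc)
              (by rw [hTv]; linarith) hS2
              (by rw [hcast]; linarith)
            rwa [show h + cp + S = h + c by rw [hcsplit]; abel] at this
          · have hSv1' : ⟪S, x⟫ = 1 := eq_one_of_int (hint S hSΔ) hSv1 hS2
            exact ⟨S, h + cp, hS, hposT, by rw [hcsplit]; abel, hSv1'⟩
      · push_neg at h1 h2
        have hcc := RS.inner_self_pos_of_root hcΔ
        have hhc' : ⟪h, c⟫ < 0 := by
          have e1 : ⟪h + c, c⟫ = ⟪h, c⟫ + ⟪c, c⟫ := by rw [inner_add_left]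
          have e2 : ⟪h + c, c⟫ = ⟪h + c, cp⟫ + ⟪h + c, S⟫ := by
            rw [hcsplit, inner_add_right]
          linarith
        by_cases hhS : ⟪h, S⟫ < 0
        · have hr : h + S ∈ RS.pos := RS.pos_add_of_inner_neg hh hS hhS
          exact ⟨cp, h + S, hcp, hr, by rw [hcsplit]; abel, hcpv⟩
        · push_neg at hhS
          have hhcp : ⟪h, cp⟫ < 0 := by
            have : ⟪h, c⟫ = ⟪h, cp⟫ + ⟪h, S⟫ := by rw [hcsplit, inner_add_right]
            linarith
          have hU : h + cp ∈ RS.pos := RS.pos_add_of_inner_neg hh hcp hhcp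
          have hUv : ⟪h + cp, x⟫ = ⟪h, x⟫ + 1 := by rw [inner_add_left, hcpv]
          rcases hhv0 with hh0 | hh0
          · exact ⟨h + cp, S, hU, hS, by rw [hcsplit]; abel,
              by rw [hUv, hh0]; norm_num⟩
          · by_cases hS2 : 2 ≤ ⟪S, x⟫
            · have := H2' (h + cp) S hU hS
                (by rw [show h + cp + S = h + c by rw [hcsplit]; abel]; exact hhc)
                (by rw [hUv]; linarith) hS2
                (by rw [hcast]; linarith)
              rwa [show h + cp + S = h + c by rw [hcsplit]; abel] at this
            · have hSv1' : ⟪S, x⟫ = 1 := eq_one_of_int (hint S hSΔ) hSv1 hS2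
              exact ⟨S, h + cp, hS, hU, by rw [hcsplit]; abel, hSv1'⟩
  · -- AH1
    intro γ hγ hγv hm
    have hγΔ := RS.pos_mem_delta hγ
    have hθΔ := RS.pos_mem_delta RS.θ_mem
    have hγne : γ ≠ RS.θ := fun he => by rw [he] at hγv; linarith
    have hhtγ1 := RS.pos_htF hγ
    have hhtγθ := RS.htF_le_theta hγ
    have hn1 : 1 ≤ n := by exact_mod_cast (by linarith : (1:ℝ) ≤ (n:ℝ))
    have hcast : ((n-1 : ℕ):ℝ) = (n:ℝ) - 1 := by push_cast [hn1]; ring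
    rcases RS.af2 hγ hγne with ⟨j, hipj, hgp⟩ | ⟨hipθ, htg⟩
    · -- simple ascent case
      have hjΔ := RS.simpleRoot_mem j
      have hjpos := RS.simple_pos j
      have hgpΔ := RS.pos_mem_delta hgp
      have hgpv : ⟪γ + RS.simpleRoot j, x⟫ = ⟪γ, x⟫ + ⟪RS.simpleRoot j, x⟫ :=
        inner_add_left _ _ _
      have hhtgp : RS.htF (γ + RS.simpleRoot j) = RS.htF γ + 1 := by
        rw [map_add, RS.htF_simple]
      rcases int_three_cases (hint _ hjΔ) (hs1 j) with hb | hb | hb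
      · exact ⟨RS.simpleRoot j, hjpos, hgpΔ, Or.inl hb⟩
      · -- b = 0 : recurse AH1 on γ + αⱼ then patch
        have AH1' := (ih (n-1) (by omega)).2.2.1
        obtain ⟨κ', hκ', hgk, hor⟩ :=
          AH1' (γ + RS.simpleRoot j) hgp (by rw [hgpv, hb]; linarith)
            (by rw [hcast, hhtgp]; linarith)
        have hκΔ := RS.pos_mem_delta hκ'
        have hgkv : ⟪γ + RS.simpleRoot j + κ', x⟫ = ⟪γ, x⟫ + ⟪κ', x⟫ := by
          rw [inner_add_left, hgpv, hb]; ring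
        have hne1 : γ ≠ γ + RS.simpleRoot j + κ' := by
          intro he
          apply RS.pos_add_ne_zero hjpos hκ'
          have h0 : γ + (RS.simpleRoot j + κ') = γ + 0 := by
            rw [add_zero, ← add_assoc]; exact he.symm
          exact add_left_cancel h0
        have hsum_eq : γ + (RS.simpleRoot j + κ') = γ + RS.simpleRoot j + κ' := by abel
        rcases hor with hA | hB
        · -- config A : val κ' = 1
          by_cases hA1 : ⟪γ, κ'⟫ < 0
          · exact ⟨κ', hκ',
              RS.pos_mem_delta (RS.pos_add_of_inner_neg hγ hκ' hA1), Or.inl hA⟩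
          · by_cases hA2 : 0 < ⟪γ, γ + RS.simpleRoot j + κ'⟫
            · have hsub := RS.root_sub_mem hγΔ hgk hA2 hne1
              have hr : RS.simpleRoot j + κ' ∈ RS.Δ := by
                have := RS.neg_mem_delta hsub
                rwa [show -(γ - (γ + RS.simpleRoot j + κ')) = RS.simpleRoot j + κ'
                  by abel] at this
              have hrpos := RS.mem_pos_of_natC hr
                (RS.natC_add (RS.natC_simple j) (RS.pos_natC hκ'))
              refine ⟨RS.simpleRoot j + κ', hrpos, ?_, Or.inl ?_⟩
              · rw [hsum_eq]; exact hgk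
              · simp [inner_add_left, hA, hb]
            · push_neg at hA1 hA2
              have hipγγ' : ⟪γ, γ + RS.simpleRoot j⟫ ≤ 0 := by
                have : ⟪γ, γ + RS.simpleRoot j + κ'⟫
                    = ⟪γ, γ + RS.simpleRoot j⟫ + ⟪γ, κ'⟫ := by
                  rw [← inner_add_right]
                linarith
              have hαγ' : 0 < ⟪RS.simpleRoot j, γ + RS.simpleRoot j⟫ := by
                have h1 := RS.inner_self_pos_of_root hgpΔ
                have h2 : ⟪γ + RS.simpleRoot j, γ + RS.simpleRoot j⟫
                    = ⟪γ, γ + RS.simpleRoot j⟫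
                      + ⟪RS.simpleRoot j, γ + RS.simpleRoot j⟫ := by
                  rw [← inner_add_left]
                linarith
              by_cases hjk : ⟪RS.simpleRoot j, κ'⟫ < 0
              · have hrpos := RS.pos_add_of_inner_neg hjpos hκ' hjk
                refine ⟨RS.simpleRoot j + κ', hrpos, ?_, Or.inl ?_⟩
                · rw [hsum_eq]; exact hgk
                · simp [inner_add_left, hA, hb]
              · push_neg at hjk
                have hjg : 0 < ⟪RS.simpleRoot j, γ + RS.simpleRoot j + κ'⟫ := by
                  have : ⟪RS.simpleRoot j, γ + RS.simpleRoot j + κ'⟫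
                      = ⟪RS.simpleRoot j, γ + RS.simpleRoot j⟫
                        + ⟪RS.simpleRoot j, κ'⟫ := by
                    rw [← inner_add_right]
                  linarith
                have hne2 : γ + RS.simpleRoot j + κ' ≠ RS.simpleRoot j :=
                  RS.ne_of_sub_eq_pos_add (by abel) hγ hκ'
                have hsub := RS.root_sub_mem hgk hjΔ
                  (by rwa [real_inner_comm (RS.simpleRoot j) (γ + RS.simpleRoot j + κ')])
                  hne2
                rw [show γ + RS.simpleRoot j + κ' - RS.simpleRoot j = γ + κ' by abel]
                  at hsub
                exact ⟨κ', hκ', hsub, Or.inl hA⟩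
        · -- config B : val (γ' + κ') = 0
          by_cases hB1 : 0 < ⟪γ, γ + RS.simpleRoot j + κ'⟫
          · have hsub := RS.root_sub_mem hγΔ hgk hB1 hne1
            have hr : RS.simpleRoot j + κ' ∈ RS.Δ := by
              have := RS.neg_mem_delta hsub
              rwa [show -(γ - (γ + RS.simpleRoot j + κ')) = RS.simpleRoot j + κ'
                by abel] at this
            have hrpos := RS.mem_pos_of_natC hr
              (RS.natC_add (RS.natC_simple j) (RS.pos_natC hκ'))
            refine ⟨RS.simpleRoot j + κ', hrpos, ?_, Or.inr ?_⟩
            · rw [hsum_eq]; exact hgk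
            · rw [hsum_eq]; exact hB
          · by_cases hB2 : ⟪γ, κ'⟫ < 0
            · refine ⟨κ', hκ',
                RS.pos_mem_delta (RS.pos_add_of_inner_neg hγ hκ' hB2), Or.inr ?_⟩
              have : ⟪γ + κ', x⟫ = ⟪γ, x⟫ + ⟪κ', x⟫ := inner_add_left _ _ _
              rw [hgkv] at hB
              linarith [hB, this]
            · push_neg at hB1 hB2
              have hipγγ' : ⟪γ, γ + RS.simpleRoot j⟫ ≤ 0 := by
                have : ⟪γ, γ + RS.simpleRoot j + κ'⟫
                    = ⟪γ, γ + RS.simpleRoot j⟫ + ⟪γ, κ'⟫ := by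
                  rw [← inner_add_right]
                linarith
              have hαγ' : 0 < ⟪RS.simpleRoot j, γ + RS.simpleRoot j⟫ := by
                have h1 := RS.inner_self_pos_of_root hgpΔ
                have h2 : ⟪γ + RS.simpleRoot j, γ + RS.simpleRoot j⟫
                    = ⟪γ, γ + RS.simpleRoot j⟫
                      + ⟪RS.simpleRoot j, γ + RS.simpleRoot j⟫ := by
                  rw [← inner_add_left]
                linarith
              by_cases hjk : ⟪RS.simpleRoot j, κ'⟫ < 0
              · have hrpos := RS.pos_add_of_inner_neg hjpos hκ' hjk
                refine ⟨RS.simpleRoot j + κ', hrpos, ?_, Or.inr ?_⟩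
                · rw [hsum_eq]; exact hgk
                · rw [hsum_eq]; exact hB
              · push_neg at hjk
                have hjg : 0 < ⟪RS.simpleRoot j, γ + RS.simpleRoot j + κ'⟫ := by
                  have : ⟪RS.simpleRoot j, γ + RS.simpleRoot j + κ'⟫
                      = ⟪RS.simpleRoot j, γ + RS.simpleRoot j⟫
                        + ⟪RS.simpleRoot j, κ'⟫ := by
                    rw [← inner_add_right]
                  linarith
                have hne2 : γ + RS.simpleRoot j + κ' ≠ RS.simpleRoot j :=
                  RS.ne_of_sub_eq_pos_add (by abel) hγ hκ'
                have hsub := RS.root_sub_mem hgk hjΔ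
                  (by rwa [real_inner_comm (RS.simpleRoot j) (γ + RS.simpleRoot j + κ')])
                  hne2
                rw [show γ + RS.simpleRoot j + κ' - RS.simpleRoot j = γ + κ' by abel]
                  at hsub
                refine ⟨κ', hκ', hsub, Or.inr ?_⟩
                have e1 : ⟪γ + κ', x⟫ = ⟪γ, x⟫ + ⟪κ', x⟫ := inner_add_left _ _ _
                rw [hgkv] at hB
                linarith [hB, e1]
      · -- b ≤ -1 : AH2₀₁ (αⱼ, γ + αⱼ)
        have AH201' := (ih (n-1) (by omega)).2.2.2.2
        have := AH201' (RS.simpleRoot j) (γ + RS.simpleRoot j) hjpos hgp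
          (by rw [show γ + RS.simpleRoot j - RS.simpleRoot j = γ by abel]; exact hγ)
          (by linarith) (by rw [hgpv]; linarith)
          (by rw [hcast, hhtgp]; linarith)
        rwa [show γ + RS.simpleRoot j - RS.simpleRoot j = γ by abel] at this
    · -- θ-descent case : tg = θ - γ ∈ pos, ⟪γ, θ⟫ > 0
      have htgΔ := RS.pos_mem_delta htg
      have htgv : ⟪RS.θ - γ, x⟫ = ⟪RS.θ, x⟫ - ⟪γ, x⟫ := inner_sub_left _ _ _
      have hhttg : RS.htF (RS.θ - γ) = RS.htF RS.θ - RS.htF γ := by rw [map_sub]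
      by_cases hθ2 : 2 ≤ ⟪RS.θ, x⟫
      · -- AH2₁₀ (θ, θ - γ)
        have AH210' := (ih (n-1) (by omega)).2.2.2.1
        have := AH210' RS.θ (RS.θ - γ) RS.θ_mem htg
          (by rw [show RS.θ - (RS.θ - γ) = γ by abel]; exact hγ)
          (by linarith) (by rw [htgv]; linarith)
          (by rw [hcast, hhttg]; linarith)
        rwa [show RS.θ - (RS.θ - γ) = γ by abel] at this
      · have hθle1 : ⟪RS.θ, x⟫ ≤ 1 := by
          by_contra hgt
          push_neg at hgt
          exact hθ2 (int_ge_two (hint _ hθΔ) hgt)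
        rcases int_three_cases (hint _ hθΔ) hθle1 with hθ1 | hθ1 | hθ1
        · -- val θ = 1 : split θ - γ and patch
          have H1' := (ih (n-1) (by omega)).1
          obtain ⟨cp, S, hcp, hS, hsplit, hcpv⟩ :=
            H1' (RS.θ - γ) htg (by rw [hcast, hhttg]; linarith)
              (by rw [htgv, hθ1]; linarith)
          have hcpΔ := RS.pos_mem_delta hcp
          have hSΔ := RS.pos_mem_delta hS
          have hSv : ⟪S, x⟫ = -⟪γ, x⟫ := by
            have : ⟪RS.θ - γ, x⟫ = ⟪cp, x⟫ + ⟪S, x⟫ := by rw [hsplit, inner_add_left]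
            rw [htgv, hθ1, hcpv] at this
            linarith
          by_cases hc1 : ⟪γ, cp⟫ < 0
          · exact ⟨cp, hcp,
              RS.pos_mem_delta (RS.pos_add_of_inner_neg hγ hcp hc1), Or.inl hcpv⟩
          · by_cases hc2 : ⟪γ, S⟫ < 0
            · refine ⟨S, hS,
                RS.pos_mem_delta (RS.pos_add_of_inner_neg hγ hS hc2), Or.inr ?_⟩
              rw [inner_add_left, hSv]; ring
            · push_neg at hc1 hc2
              have htgtg := RS.inner_self_pos_of_root htgΔ
              have hθtg : 0 < ⟪RS.θ, RS.θ - γ⟫ := by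
                have e1 : ⟪RS.θ, RS.θ - γ⟫
                    = ⟪γ, RS.θ - γ⟫ + ⟪RS.θ - γ, RS.θ - γ⟫ := by
                  rw [← inner_add_left]; congr 1; abel
                have e2 : ⟪γ, RS.θ - γ⟫ = ⟪γ, cp⟫ + ⟪γ, S⟫ := by
                  rw [hsplit, inner_add_right]
                linarith
              have hhtcp : RS.htF cp < RS.htF RS.θ := by
                have e1 : RS.htF (RS.θ - γ) = RS.htF cp + RS.htF S := by
                  rw [hsplit, map_add]
                have := RS.pos_htF hS
                linarith [hhttg]
              have hhtS : RS.htF S < RS.htF RS.θ := by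
                have e1 : RS.htF (RS.θ - γ) = RS.htF cp + RS.htF S := by
                  rw [hsplit, map_add]
                have := RS.pos_htF hcp
                linarith [hhttg]
              have hθeq : RS.θ = γ + (cp + S) := by rw [← hsplit]; abel
              by_cases hθcp : 0 < ⟪RS.θ, cp⟫
              · have hne : RS.θ ≠ cp := fun he => by rw [← he] at hhtcp; linarith
                have hsub := RS.root_sub_mem hθΔ hcpΔ hθcp hne
                rw [show RS.θ - cp = γ + S by rw [hθeq]; abel] at hsub
                refine ⟨S, hS, hsub, Or.inr ?_⟩
                rw [inner_add_left, hSv]; ring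
              · have hθS : 0 < ⟪RS.θ, S⟫ := by
                  have : ⟪RS.θ, RS.θ - γ⟫ = ⟪RS.θ, cp⟫ + ⟪RS.θ, S⟫ := by
                    rw [hsplit, inner_add_right]
                  push_neg at hθcp
                  linarith
                have hne : RS.θ ≠ S := fun he => by rw [← he] at hhtS; linarith
                have hsub := RS.root_sub_mem hθΔ hSΔ hθS hne
                rw [show RS.θ - S = γ + cp by rw [hθeq]; abel] at hsub
                exact ⟨cp, hcp, hsub, Or.inl hcpv⟩
        · -- val θ = 0
          refine ⟨RS.θ - γ, htg, ?_, Or.inr ?_⟩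
          · rw [show γ + (RS.θ - γ) = RS.θ by abel]; exact hθΔ
          · rw [show γ + (RS.θ - γ) = RS.θ by abel]; exact hθ1
        · linarith
  · -- AH2₁₀ (e, c) : η = D(e) of VAL ≤ 0, χ = (c,0) of VAL ≥ 2, ρ = D(e - c)
    intro e c he hc hg hev hcv hm
    have heΔ := RS.pos_mem_delta he
    have hcΔ := RS.pos_mem_delta hc
    have hgΔ := RS.pos_mem_delta hg
    have hcns : ∀ i, c ≠ RS.simpleRoot i := by
      intro i hi
      have := hs1 i
      rw [← hi] at this
      linarith
    have hht2 := RS.htF_ge_two hc hcns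
    have hn1 : 1 ≤ n := by exact_mod_cast (by linarith : (1:ℝ) ≤ (n:ℝ))
    have hcast : ((n-1 : ℕ):ℝ) = (n:ℝ) - 1 := by push_cast [hn1]; ring
    have H1' := (ih (n-1) (by omega)).1
    have AH210' := (ih (n-1) (by omega)).2.2.2.1
    obtain ⟨cp, S, hcp, hS, hcsplit, hcpv⟩ :=
      H1' c hc (by rw [hcast]; linarith) hcv
    have hcpΔ := RS.pos_mem_delta hcp
    have hSΔ := RS.pos_mem_delta hS
    have hSv : ⟪S, x⟫ = ⟪c, x⟫ - 1 := by
      have : ⟪c, x⟫ = ⟪cp, x⟫ + ⟪S, x⟫ := by rw [hcsplit, inner_add_left]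
      linarith
    have hhtS : RS.htF S ≤ RS.htF c - 1 := by
      have h1 : RS.htF c = RS.htF cp + RS.htF S := by rw [hcsplit, map_add]
      have h2 := RS.pos_htF hcp
      linarith
    have heqT : e - c + S = e - cp := by rw [hcsplit]; abel
    have heqC : e - c + cp = e - S := by rw [hcsplit]; abel
    have hgS_nat := RS.natC_add (RS.pos_natC hg) (RS.pos_natC hS)
    -- helper finishing move when e - cp ∈ Δ is known
    have finish2 : e - c + S ∈ RS.Δ → RS.ACP x (e - c) := by
      intro hsub
      by_cases hev2 : 2 ≤ ⟪e, x⟫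
      · by_cases hS2 : 2 ≤ ⟪S, x⟫
        · have hposT : e - c + S ∈ RS.pos := RS.mem_pos_of_natC hsub hgS_nat
          rw [heqT] at hposT
          have := AH210' (e - cp) S hposT hS
            (by rw [show e - cp - S = e - c by rw [hcsplit]; abel]; exact hg)
            (by rw [inner_sub_left, hcpv]; linarith) hS2
            (by rw [hcast]; linarith)
          rwa [show e - cp - S = e - c by rw [hcsplit]; abel] at this
        · have hSv1 : ⟪S, x⟫ = 1 := eq_one_of_int (hint S hSΔ) (by linarith) hS2
          exact ⟨S, hS, hsub, Or.inl hSv1⟩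
      · have hev1 : ⟪e, x⟫ = 1 := eq_one_of_int (hint e heΔ) hev
          (fun h => hev2 (by linarith [int_ge_two (hint e heΔ) (by linarith : (1:ℝ) < ⟪e,x⟫)]))
        refine ⟨S, hS, hsub, Or.inr ?_⟩
        rw [heqT, inner_sub_left, hcpv, hev1]; ring
    by_cases h1 : ⟪e - c, cp⟫ < 0
    · exact ⟨cp, hcp, RS.pos_mem_delta (RS.pos_add_of_inner_neg hg hcp h1),
        Or.inl hcpv⟩
    · by_cases h2 : ⟪e - c, S⟫ < 0
      · exact finish2 (RS.pos_mem_delta (RS.pos_add_of_inner_neg hg hS h2))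
      · push_neg at h1 h2
        have hcc := RS.inner_self_pos_of_root hcΔ
        have hec : 0 < ⟪e, c⟫ := by
          have e1 : ⟪e, c⟫ = ⟪e - c, c⟫ + ⟪c, c⟫ := by
            rw [← inner_add_left]; congr 1; abel
          have e2 : ⟪e - c, c⟫ = ⟪e - c, cp⟫ + ⟪e - c, S⟫ := by
            rw [hcsplit, inner_add_right]
          linarith
        by_cases h3 : 0 < ⟪e, S⟫
        · have hne : e ≠ S := Ne.symm (fun he' => (RS.ne_of_sub_eq_pos_add
            heqC.symm hg hcp) (by rw [he'])) 
          have hsub := RS.root_sub_mem heΔ hSΔ h3 hne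
          rw [← heqC] at hsub
          exact ⟨cp, hcp, hsub, Or.inl hcpv⟩
        · have h4 : 0 < ⟪e, cp⟫ := by
            have : ⟪e, c⟫ = ⟪e, cp⟫ + ⟪e, S⟫ := by rw [hcsplit, inner_add_right]
            push_neg at h3
            linarith
          have hne : e ≠ cp := Ne.symm (fun he' => (RS.ne_of_sub_eq_pos_add
            heqT.symm hg hS) (by rw [he']))
          have hsub := RS.root_sub_mem heΔ hcpΔ h4 hne
          rw [← heqT] at hsub
          exact finish2 hsub
  · -- AH2₀₁ (h, f)
    intro h f hh hf hg hhv hfv hm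
    have hhΔ := RS.pos_mem_delta hh
    have hfΔ := RS.pos_mem_delta hf
    have hgΔ := RS.pos_mem_delta hg
    have hhtf1 := RS.pos_htF hf
    have hhtfθ := RS.htF_le_theta hf
    have hn1 : 1 ≤ n := by exact_mod_cast (by linarith : (1:ℝ) ≤ (n:ℝ))
    have hcast : ((n-1 : ℕ):ℝ) = (n:ℝ) - 1 := by push_cast [hn1]; ring
    have AH1' := (ih (n-1) (by omega)).2.2.1
    have AH210' := (ih (n-1) (by omega)).2.2.2.1
    have AH201' := (ih (n-1) (by omega)).2.2.2.2
    obtain ⟨κ', hκ', hfk, hor⟩ := AH1' f hf hfv (by rw [hcast]; linarith)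
    have hκΔ := RS.pos_mem_delta hκ'
    have hfkΔ := hfk
    have heqA : f - h + (h + κ') = f + κ' := by abel
    have heqB : f - h + κ' = f + κ' - h := by abel
    have hκht : RS.htF κ' ≤ RS.htF RS.θ - RS.htF f := by
      have h1 := RS.ht_root_le_theta hfk
      have h2 : RS.htF (f + κ') = RS.htF f + RS.htF κ' := by rw [map_add]
      linarith
    have hhv0 : ⟪h, x⟫ = 0 ∨ ⟪h, x⟫ ≤ -1 := by
      rcases int_three_cases (hint h hhΔ) (by linarith) with h' | h' | h'
      · exfalso; linarith
      · exact Or.inl h'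
      · exact Or.inr h'
    -- finishing move when h + κ' ∈ Δ is known (used in config A and B-last)
    have finishHK : h + κ' ∈ RS.Δ → RS.ACP x (f - h) := by
      intro hhk
      have hkpos : h + κ' ∈ RS.pos := RS.mem_pos_of_natC hhk
        (RS.natC_add (RS.pos_natC hh) (RS.pos_natC hκ'))
      have hkval : ⟪h + κ', x⟫ = ⟪h, x⟫ + ⟪κ', x⟫ := inner_add_left _ _ _
      have hsum : f - h + (h + κ') ∈ RS.Δ := by rw [heqA]; exact hfk
      rcases hor with hA | hB
      · -- val κ' = 1
        rcases hhv0 with hh0 | hh0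
        · exact ⟨h + κ', hkpos, hsum, Or.inl (by rw [hkval, hA, hh0]; ring)⟩
        · have hfkv : ⟪f + κ', x⟫ = ⟪f, x⟫ + 1 := by rw [inner_add_left, hA]
          by_cases hf1 : ⟪f, x⟫ = -1
          · refine ⟨h + κ', hkpos, hsum, Or.inr ?_⟩
            rw [heqA, hfkv, hf1]; ring
          · have hf2 : ⟪f, x⟫ ≤ -2 := by
              have hlt : ⟪f, x⟫ < -1 := lt_of_le_of_ne hfv hf1
              have h5 := int_le_neg_one (t := ⟪f, x⟫ + 1) (by
                obtain ⟨k, hk⟩ := hint f hfΔ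
                exact ⟨k + 1, by rw [hk]; push_cast; ring⟩)
                (by linarith)
              linarith
            have hfkpos : f + κ' ∈ RS.pos := by
              have : f - h + (h + κ') ∈ RS.pos := RS.mem_pos_of_natC hsum
                (RS.natC_add (RS.pos_natC hg) (RS.pos_natC hkpos))
              rwa [heqA] at this
            have := AH201' (h + κ') (f + κ') hkpos hfkpos
              (by rw [show f + κ' - (h + κ') = f - h by abel]; exact hg)
              (by rw [hkval, hA]; linarith)
              (by rw [hfkv]; linarith)
              (by
                have hht : RS.htF (f + κ') = RS.htF f + RS.htF κ' := by rw [map_add]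
                have hκ1 := RS.pos_htF hκ'
                rw [hcast, hht]
                linarith)
            rwa [show f + κ' - (h + κ') = f - h by abel] at this
      · -- val (f + κ') = 0
        exact ⟨h + κ', hkpos, hsum, Or.inr (by rw [heqA]; exact hB)⟩
    -- finishing move when (f - h) + κ' ∈ Δ is known and we are in config B
    have finishGK : (f - h) + κ' ∈ RS.Δ → ⟪f + κ', x⟫ = 0 → RS.ACP x (f - h) := by
      intro hgk hB
      have hκv : ⟪κ', x⟫ = -⟪f, x⟫ := by
        have : ⟪f + κ', x⟫ = ⟪f, x⟫ + ⟪κ', x⟫ := inner_add_left _ _ _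
        linarith
      have hgkv : ⟪f - h + κ', x⟫ = -⟪h, x⟫ := by
        rw [inner_add_left, inner_sub_left, hκv]; ring
      rcases hhv0 with hh0 | hh0
      · exact ⟨κ', hκ', hgk, Or.inr (by rw [hgkv, hh0]; ring)⟩
      · by_cases hκ1 : ⟪κ', x⟫ = 1
        · exact ⟨κ', hκ', hgk, Or.inl hκ1⟩
        · have hκ2 : 2 ≤ ⟪κ', x⟫ := by
            have h1 : 1 ≤ ⟪κ', x⟫ := by rw [hκv]; linarith
            rcases eq_or_lt_of_le h1 with h' | h'
            · exact absurd h'.symm hκ1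
            · exact int_ge_two (hint κ' hκΔ) h'
          have hgkpos : f - h + κ' ∈ RS.pos := RS.mem_pos_of_natC hgk
            (RS.natC_add (RS.pos_natC hg) (RS.pos_natC hκ'))
          have := AH210' (f - h + κ') κ' hgkpos hκ'
            (by rw [show f - h + κ' - κ' = f - h by abel]; exact hg)
            (by rw [hgkv]; linarith) hκ2
            (by rw [hcast]; linarith)
          rwa [show f - h + κ' - κ' = f - h by abel] at this
    by_cases hx1 : 0 < ⟪f - h, f + κ'⟫
    · -- (f - h) - (f + κ') = -(h + κ') is a root
      have hne : f - h ≠ f + κ' := by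
        intro he
        apply RS.pos_add_ne_zero hh hκ'
        have : f - h - (f + κ') = 0 := by rw [← he]; abel
        have h0 : h + κ' = -(f - h - (f + κ')) := by abel
        rw [h0, this, neg_zero]
      have hsub := RS.root_sub_mem hgΔ hfkΔ hx1 hne
      have hhk : h + κ' ∈ RS.Δ := by
        have := RS.neg_mem_delta hsub
        rwa [show -(f - h - (f + κ')) = h + κ' by abel] at this
      exact finishHK hhk
    · rcases hor with hA | hB
      · -- config A, not hx1
        by_cases ha1 : ⟪f - h, κ'⟫ < 0
        · exact ⟨κ', hκ', RS.pos_mem_delta (RS.pos_add_of_inner_neg hg hκ' ha1),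
            Or.inl hA⟩
        · push_neg at hx1 ha1
          have hgf : ⟪f - h, f⟫ ≤ 0 := by
            have : ⟪f - h, f + κ'⟫ = ⟪f - h, f⟫ + ⟪f - h, κ'⟫ := inner_add_right _ _ _
            linarith
          have hff := RS.inner_self_pos_of_root hfΔ
          have hhf : 0 < ⟪h, f⟫ := by
            have : ⟪f, f⟫ = ⟪f - h, f⟫ + ⟪h, f⟫ := by
              rw [← inner_add_left, sub_add_cancel]
            linarith
          by_cases ha3 : 0 < ⟪h, f + κ'⟫
          · have hne : h ≠ f + κ' := by
              intro he
              apply RS.pos_add_ne_zero hg hκ'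
              have : f + κ' - h = 0 := by rw [← he]; abel
              rwa [← heqB] at this
            have hsub := RS.root_sub_mem hhΔ hfkΔ ha3 hne
            have hgk : f - h + κ' ∈ RS.Δ := by
              have := RS.neg_mem_delta hsub
              rwa [show -(h - (f + κ')) = f - h + κ' by abel] at this
            exact ⟨κ', hκ', hgk, Or.inl hA⟩
          · have ha4 : ⟪h, κ'⟫ < 0 := by
              have : ⟪h, f + κ'⟫ = ⟪h, f⟫ + ⟪h, κ'⟫ := inner_add_right _ _ _
              push_neg at ha3
              linarith
            exact finishHK (RS.pos_mem_delta (RS.pos_add_of_inner_neg hh hκ' ha4))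
      · -- config B, not hx1
        by_cases hb2 : ⟪f - h, κ'⟫ < 0
        · exact finishGK (RS.pos_mem_delta (RS.pos_add_of_inner_neg hg hκ' hb2)) hB
        · push_neg at hx1 hb2
          have hgf : ⟪f - h, f⟫ ≤ 0 := by
            have : ⟪f - h, f + κ'⟫ = ⟪f - h, f⟫ + ⟪f - h, κ'⟫ := inner_add_right _ _ _
            linarith
          have hff := RS.inner_self_pos_of_root hfΔ
          have hhf : 0 < ⟪h, f⟫ := by
            have : ⟪f, f⟫ = ⟪f - h, f⟫ + ⟪h, f⟫ := by
              rw [← inner_add_left, sub_add_cancel]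
            linarith
          by_cases hb3 : 0 < ⟪h, f + κ'⟫
          · have hne : h ≠ f + κ' := by
              intro he
              apply RS.pos_add_ne_zero hg hκ'
              have : f + κ' - h = 0 := by rw [← he]; abel
              rwa [← heqB] at this
            have hsub := RS.root_sub_mem hhΔ hfkΔ hb3 hne
            have hgk : f - h + κ' ∈ RS.Δ := by
              have := RS.neg_mem_delta hsub
              rwa [show -(h - (f + κ')) = f - h + κ' by abel] at this
            exact finishGK hgk hB
          · have hb4 : ⟪h, κ'⟫ < 0 := by
              have : ⟪h, f + κ'⟫ = ⟪h, f⟫ + ⟪h, κ'⟫ := inner_add_right _ _ _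
              push_neg at hb3
              linarith
            exact finishHK (RS.pos_mem_delta (RS.pos_add_of_inner_neg hh hκ' hb4))

end Combin

end RootSystemData
namespace RootSystemData

variable {V : Type*} [NormedAddCommGroup V] [InnerProductSpace ℝ V]
variable {p : ℕ} (RS : RootSystemData V p)

lemma ex_htN : ∃ N : ℕ, RS.htF RS.θ = (N : ℝ) := by
  obtain ⟨c, hc⟩ := RS.pos_natC RS.θ_mem
  refine ⟨∑ i, c i, ?_⟩
  rw [hc, RS.htF_natCombo]
  push_cast; rfl

section Combin2

variable (x : V)
variable (hs1 : ∀ i, ⟪RS.simpleRoot i, x⟫ ≤ 1) (hθ0 : 0 ≤ ⟪RS.θ, x⟫)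
  (hint : ∀ γ ∈ RS.Δ, ∃ k : ℤ, ⟪γ, x⟫ = (k : ℝ))

include hs1 hθ0 hint

/-- **K1** -/
lemma k1 {ν : V} (hν : ν ∈ RS.pos) (hval : ⟪ν, x⟫ = 1)
    (hns : ∀ i, ν ≠ RS.simpleRoot i) :
    ∃ σ τ : V, σ ∈ RS.pos ∧ τ ∈ RS.pos ∧ ν = σ + τ ∧ ⟪σ, x⟫ = 1 := by
  obtain ⟨N, hN⟩ := RS.ex_htN
  obtain ⟨j, hipj, hz⟩ := RS.f2 hν hns
  have hζval : ⟪ν - RS.simpleRoot j, x⟫ = 1 - ⟪RS.simpleRoot j, x⟫ := by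
    rw [inner_sub_left, hval]
  have hνeq : ν = RS.simpleRoot j + (ν - RS.simpleRoot j) := by abel
  rcases int_three_cases (hint _ (RS.simpleRoot_mem j)) (hs1 j) with hb | hb | hb
  · exact ⟨RS.simpleRoot j, ν - RS.simpleRoot j, RS.simple_pos j, hz, hνeq, hb⟩
  · exact ⟨ν - RS.simpleRoot j, RS.simpleRoot j, hz, RS.simple_pos j,
      by abel, by rw [hζval, hb]; norm_num⟩
  · have H2' := (RS.master x hs1 hθ0 hint (2*N+2)).2.1
    have hhtζ := RS.htF_le_theta hz
    have := H2' (RS.simpleRoot j) (ν - RS.simpleRoot j) (RS.simple_pos j) hz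
      (by rw [← hνeq]; exact hν) (by linarith)
      (by rw [hζval]; linarith)
      (by push_cast; rw [← hN]; linarith)
    rwa [← hνeq] at this

/-- **K2** -/
lemma k2 {ν : V} (hν : ν ∈ RS.pos) (hval : ⟪ν, x⟫ = 0) (hne : ν ≠ RS.θ) :
    ∃ κ : V, κ ∈ RS.pos ∧ ν + κ ∈ RS.Δ ∧ (⟪κ, x⟫ = 1 ∨ ⟪ν + κ, x⟫ = 0) := by
  obtain ⟨N, hN⟩ := RS.ex_htN
  have hθΔ := RS.pos_mem_delta RS.θ_mem
  rcases RS.af2 hν hne with ⟨j, hipj, hgp⟩ | ⟨hipθ, htg⟩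
  · have hjv : ⟪ν + RS.simpleRoot j, x⟫ = ⟪RS.simpleRoot j, x⟫ := by
      rw [inner_add_left, hval]; ring
    rcases int_three_cases (hint _ (RS.simpleRoot_mem j)) (hs1 j) with hb | hb | hb
    · exact ⟨RS.simpleRoot j, RS.simple_pos j, RS.pos_mem_delta hgp, Or.inl hb⟩
    · exact ⟨RS.simpleRoot j, RS.simple_pos j, RS.pos_mem_delta hgp,
        Or.inr (by rw [hjv, hb])⟩
    · have AH201' := (RS.master x hs1 hθ0 hint (2*N+3)).2.2.2.2
      have hhtgp := RS.htF_le_theta hgp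
      have hhtgp1 := RS.pos_htF hgp
      have := AH201' (RS.simpleRoot j) (ν + RS.simpleRoot j) (RS.simple_pos j) hgp
        (by rw [show ν + RS.simpleRoot j - RS.simpleRoot j = ν by abel]; exact hν)
        (by linarith) (by rw [hjv]; linarith)
        (by push_cast; rw [← hN]; linarith)
      rwa [show ν + RS.simpleRoot j - RS.simpleRoot j = ν by abel] at this
  · have htgv : ⟪RS.θ - ν, x⟫ = ⟪RS.θ, x⟫ := by rw [inner_sub_left, hval]; ring
    have hνtg : ν + (RS.θ - ν) = RS.θ := by abel
    by_cases hθ2 : 2 ≤ ⟪RS.θ, x⟫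
    · have AH210' := (RS.master x hs1 hθ0 hint (2*N+3)).2.2.2.1
      have hhttg := RS.htF_le_theta htg
      have := AH210' RS.θ (RS.θ - ν) RS.θ_mem htg
        (by rw [show RS.θ - (RS.θ - ν) = ν by abel]; exact hν)
        (by linarith) (by rw [htgv]; linarith)
        (by push_cast; rw [← hN]; linarith)
      rwa [show RS.θ - (RS.θ - ν) = ν by abel] at this
    · have hθle1 : ⟪RS.θ, x⟫ ≤ 1 := by
        by_contra hgt
        push_neg at hgt
        exact hθ2 (int_ge_two (hint _ hθΔ) hgt)
      rcases int_three_cases (hint _ hθΔ) hθle1 with hθ1 | hθ1 | hθ1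
      · exact ⟨RS.θ - ν, htg, by rw [hνtg]; exact hθΔ, Or.inl (by rw [htgv, hθ1])⟩
      · exact ⟨RS.θ - ν, htg, by rw [hνtg]; exact hθΔ,
          Or.inr (by rw [hνtg, hθ1])⟩
      · linarith

end Combin2

end RootSystemData
namespace RootSystemData

variable {V : Type*} [NormedAddCommGroup V] [InnerProductSpace ℝ V]
variable {p : ℕ} (RS : RootSystemData V p)

lemma natC_nsmul {y : V} (hy : RS.NatC y) (m : ℕ) : RS.NatC ((m:ℝ) • y) := by
  obtain ⟨c, hc⟩ := hy
  refine ⟨fun i => m * c i, ?_⟩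
  rw [hc, Finset.smul_sum]
  congr 1; ext i
  rw [smul_smul]
  push_cast
  ring

section MaxPair

variable (v : V ≃ₗ[ℝ] V) (r : V) (hmax : RS.IsMaximalPair v r)

include hmax

lemma wn : RS.WeylNice v := RS.weylNice v hmax.1.1

lemma rint : ∀ β ∈ RS.Δ, ∃ n : ℤ, ⟪β, r⟫ = (n : ℝ) :=
  RS.coroot_int r hmax.1.2.1

/-- transport of inner products -/
lemma symm_inner (γ : V) : ⟪v.symm γ, r⟫ = ⟪γ, v r⟫ := by
  have h := (RS.wn v r hmax).1 (v.symm γ) r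
  rw [LinearEquiv.apply_symm_apply] at h
  exact h.symm

lemma map_inner (μ : V) : ⟪v μ, v r⟫ = ⟪μ, r⟫ := (RS.wn v r hmax).1 μ r

lemma xint : ∀ γ ∈ RS.Δ, ∃ k : ℤ, ⟪γ, v r⟫ = (k : ℝ) := by
  intro γ hγ
  rw [← RS.symm_inner v r hmax γ]
  exact RS.rint v r hmax _ ((RS.wn v r hmax).2.2 γ hγ)

lemma dom_simple_le (i : Fin p) : ⟪RS.simpleRoot i, r⟫ ≤ 0 := by
  have h := hmax.1.2.2 i
  simp only [affAct, affPos, Set.mem_setOf_eq] at h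
  rcases h.2 with h2 | h2
  · linarith
  · linarith [h2.1.ge, h2.1.le]

lemma dom_simple_pos (i : Fin p) (h0 : ⟪RS.simpleRoot i, r⟫ = 0) :
    v (RS.simpleRoot i) ∈ RS.pos := by
  have h := hmax.1.2.2 i
  simp only [affAct, affPos, Set.mem_setOf_eq] at h
  rcases h.2 with h2 | h2
  · exfalso; rw [h0] at h2; norm_num at h2
  · exact h2.2

/-- **D1**: dominance bound on positive roots. -/
lemma dom_pos_le {γ : V} (hγ : γ ∈ RS.pos) : ⟪γ, r⟫ ≤ 0 := by
  obtain ⟨c, hc⟩ := RS.pos_natC hγ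
  rw [hc]
  have : ⟪∑ i, (c i:ℝ) • RS.simpleRoot i, r⟫
      = ∑ i, (c i:ℝ) * ⟪RS.simpleRoot i, r⟫ := by
    rw [sum_inner]
    exact Finset.sum_congr rfl fun i _ => real_inner_smul_left _ _ _
  rw [this]
  apply Finset.sum_nonpos
  intro i _
  have h1 := RS.dom_simple_le v r hmax i
  have h2 : (0:ℝ) ≤ (c i : ℝ) := Nat.cast_nonneg _
  nlinarith

/-- **D2**: value-zero positive roots keep sign under `v`. -/
lemma dom_pos_zero {γ : V} (hγ : γ ∈ RS.pos) (h0 : ⟪γ, r⟫ = 0) : v γ ∈ RS.pos := by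
  obtain ⟨c, hc⟩ := RS.pos_natC hγ
  have hexp : ⟪γ, r⟫ = ∑ i, (c i:ℝ) * ⟪RS.simpleRoot i, r⟫ := by
    rw [hc, sum_inner]
    exact Finset.sum_congr rfl fun i _ => real_inner_smul_left _ _ _
  have hterm : ∀ i ∈ Finset.univ, (c i:ℝ) * ⟪RS.simpleRoot i, r⟫ = 0 := by
    apply (Finset.sum_eq_zero_iff_of_nonpos ?_).mp (by rw [← hexp, h0])
    intro i _
    have h1 := RS.dom_simple_le v r hmax i
    have h2 : (0:ℝ) ≤ (c i : ℝ) := Nat.cast_nonneg _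
    nlinarith
  have hnatc : RS.NatC (v γ) := by
    have hvγ : v γ = ∑ i, (c i:ℝ) • v (RS.simpleRoot i) := by
      rw [hc, map_sum]
      exact Finset.sum_congr rfl fun i _ => by rw [map_smul]
    rw [hvγ]
    apply Finset.sum_induction _ RS.NatC (fun a b => RS.natC_add) ⟨0, by simp⟩
    intro i _
    rcases Nat.eq_zero_or_pos (c i) with h | h
    · rw [h]; exact ⟨0, by simp⟩
    · have hci : (c i : ℝ) ≠ 0 := by positivity
      have h0i : ⟪RS.simpleRoot i, r⟫ = 0 := by
        have := hterm i (Finset.mem_univ i)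
        exact (mul_eq_zero.mp this).resolve_left hci
      exact RS.natC_nsmul (RS.pos_natC (RS.dom_simple_pos v r hmax i h0i)) (c i)
  exact RS.mem_pos_of_natC ((RS.wn v r hmax).2.1 γ (RS.pos_mem_delta hγ)) hnatc

/-- maximality constraints: `x = v r` lies in `D_max` -/
lemma max_simple (i : Fin p) : ⟪RS.simpleRoot i, v r⟫ ≤ 1 := by
  have h := hmax.2.1 i
  simp only [affActInv] at h
  rw [← RS.symm_inner v r hmax]
  linarith [h]

lemma max_theta : 0 ≤ ⟪RS.θ, v r⟫ := by
  have h := hmax.2.2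
  simp only [affActInv, map_neg, inner_neg_left] at h
  rw [← RS.symm_inner v r hmax]
  linarith [h]

/-- **X2** -/
lemma x2 {γ : V} (hγ : γ ∈ RS.Δ) (h1 : 1 ≤ ⟪γ, v r⟫) : -v.symm γ ∈ RS.pos := by
  have hβ : v.symm γ ∈ RS.Δ := (RS.wn v r hmax).2.2 γ hγ
  rcases RS.root_tri hβ with h | h
  · exfalso
    have := RS.dom_pos_le v r hmax h
    rw [RS.symm_inner v r hmax] at this
    linarith
  · exact h

/-- **X3** -/
lemma x3 {γ : V} (hγ : γ ∈ RS.pos) (h0 : ⟪γ, v r⟫ = 0) : v.symm γ ∈ RS.pos := by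
  have hβ : v.symm γ ∈ RS.Δ := (RS.wn v r hmax).2.2 γ (RS.pos_mem_delta hγ)
  rcases RS.root_tri hβ with h | h
  · exact h
  · exfalso
    have h1 : ⟪-v.symm γ, r⟫ = 0 := by
      rw [inner_neg_left, RS.symm_inner v r hmax, h0, neg_zero]
    have := RS.dom_pos_zero v r hmax h h1
    rw [map_neg, LinearEquiv.apply_symm_apply] at this
    exact RS.not_pos_neg hγ this

/-- membership in the first layer ideal, characterized -/
lemma mem_Iw_iff {μ : V} (hμ : μ ∈ RS.pos) :
    μ ∈ RS.firstLayerIdeal v r ↔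
      (⟪μ, r⟫ < -1 ∨ (⟪μ, r⟫ = -1 ∧ v μ ∈ RS.pos)) := by
  have hμΔ := RS.pos_mem_delta hμ
  have hvμΔ : v μ ∈ RS.Δ := (RS.wn v r hmax).2.1 μ hμΔ
  simp only [firstLayerIdeal, Nset, affAct, affPos, Set.mem_setOf_eq, Set.mem_sep_iff]
  constructor
  · rintro ⟨-, -, h2⟩
    simp only [Prod.fst_neg, Prod.snd_neg, map_neg, neg_neg, inner_neg_left] at h2
    rcases h2.2 with h3 | h3
    · left; linarith
    · right; exact ⟨by linarith [h3.1], h3.2⟩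
  · intro h
    refine ⟨hμ, ⟨RS.neg_mem_delta hμΔ, Or.inl (by norm_num)⟩, ?_⟩
    simp only [Prod.fst_neg, Prod.snd_neg, map_neg, neg_neg, inner_neg_left]
    refine ⟨hvμΔ, ?_⟩
    rcases h with h | h
    · left; linarith
    · right; exact ⟨by linarith [h.1], h.2⟩

/-- the complement of the first layer ideal, characterized -/
lemma mem_compl_iff {μ : V} (hμ : μ ∈ RS.pos) :
    μ ∉ RS.firstLayerIdeal v r ↔
      (⟪μ, r⟫ = 0 ∨ (⟪μ, r⟫ = -1 ∧ -v μ ∈ RS.pos)) := by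
  have hμΔ := RS.pos_mem_delta hμ
  have hvμΔ : v μ ∈ RS.Δ := (RS.wn v r hmax).2.1 μ hμΔ
  have hle := RS.dom_pos_le v r hmax hμ
  have hintμ := RS.rint v r hmax μ hμΔ
  rw [RS.mem_Iw_iff v r hmax hμ]
  constructor
  · intro h
    push_neg at h
    rcases int_three_cases hintμ (by linarith : ⟪μ, r⟫ ≤ 1) with h1 | h1 | h1
    · exfalso; linarith
    · exact Or.inl h1
    · have h2 : ⟪μ, r⟫ = -1 := le_antisymm h1 h.1
      right
      refine ⟨h2, ?_⟩
      rcases RS.root_tri hvμΔ with h4 | h4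
      · exact absurd h4 (h.2 h2)
      · exact h4
  · intro h hcon
    rcases h with h | h <;> rcases hcon with hc | hc
    · linarith
    · linarith [hc.1]
    · linarith [h.1]
    · exact RS.not_pos_neg hc.2 h.2

end MaxPair

end RootSystemData
namespace RootSystemData

variable {V : Type*} [NormedAddCommGroup V] [InnerProductSpace ℝ V]
variable {p : ℕ} (RS : RootSystemData V p)

/-- the affine-height linear functional attached to `w = v·t_r` -/
noncomputable def lamF (v : V ≃ₗ[ℝ] V) (r : V) : V →ₗ[ℝ] ℝ where
  toFun ζ := RS.htF (v ζ) - ⟪r, ζ⟫ * (RS.htF RS.θ + 1)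
  map_add' a b := by
    simp only [map_add, inner_add_right]
    ring
  map_smul' c a := by
    simp only [map_smul, inner_smul_right, RingHom.id_apply, smul_eq_mul]
    ring

lemma lamF_apply (v : V ≃ₗ[ℝ] V) (r : V) (ζ : V) :
    RS.lamF v r ζ = RS.htF (v ζ) - ⟪r, ζ⟫ * (RS.htF RS.θ + 1) := rfl

section MaxPair2

variable (v : V ≃ₗ[ℝ] V) (r : V) (hmax : RS.IsMaximalPair v r)

include hmax

lemma lam_simple_ge (j : Fin p) : 1 ≤ RS.lamF v r (RS.simpleRoot j) := by
  have hle := RS.dom_simple_le v r hmax j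
  have hθ1 := RS.pos_htF RS.θ_mem
  have hvΔ : v (RS.simpleRoot j) ∈ RS.Δ :=
    (RS.wn v r hmax).2.1 _ (RS.simpleRoot_mem j)
  have hlow := RS.htF_root_lower hvΔ
  rw [RS.lamF_apply, real_inner_comm (RS.simpleRoot j) r]
  rcases int_three_cases (RS.rint v r hmax _ (RS.simpleRoot_mem j))
    (by linarith) with h0 | h0 | h0
  · exfalso; linarith
  · have := RS.pos_htF (RS.dom_simple_pos v r hmax j h0)
    rw [h0]
    linarith
  · nlinarith

lemma lam_compl_ge {μ : V} (hμ : μ ∈ RS.pos) (hni : μ ∉ RS.firstLayerIdeal v r) :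
    1 ≤ RS.lamF v r (-μ) + (RS.htF RS.θ + 1) := by
  have hθ1 := RS.pos_htF RS.θ_mem
  have hlam : RS.lamF v r (-μ) = -RS.htF (v μ) + ⟪μ, r⟫ * (RS.htF RS.θ + 1) := by
    rw [RS.lamF_apply, map_neg, map_neg, inner_neg_right, real_inner_comm μ r]
    ring
  rw [hlam]
  rcases (RS.mem_compl_iff v r hmax hμ).mp hni with h | h
  · have hvpos := RS.dom_pos_zero v r hmax hμ h
    have h2 := RS.htF_le_theta hvpos
    rw [h]
    linarith
  · have h3 : 1 ≤ RS.htF (-v μ) := RS.pos_htF h.2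
    rw [map_neg] at h3
    rw [h.1]
    linarith

/-- maximality of a candidate with `lam = 1` -/
lemma xi_max_aux {μ : V}
    (hone : RS.lamF v r (-μ) + (RS.htF RS.θ + 1) = 1) :
    ∀ μ' ∈ RS.pos \ RS.firstLayerIdeal v r, RS.rootLe μ μ' → μ = μ' := by
  intro μ' hμ' hle
  obtain ⟨c, hc⟩ := hle
  have hkey : RS.lamF v r (-μ)
      = RS.lamF v r (-μ') + ∑ j, (c j : ℝ) * RS.lamF v r (RS.simpleRoot j) := by
    have heq : -μ = -μ' + ∑ j, (c j : ℝ) • RS.simpleRoot j := by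
      rw [hc]; abel
    rw [heq, map_add, map_sum]
    congr 1
    exact Finset.sum_congr rfl fun j _ => by rw [map_smul, smul_eq_mul]
  have hterm : ∀ j ∈ Finset.univ, (c j : ℝ) ≤ (c j : ℝ) * RS.lamF v r (RS.simpleRoot j) := by
    intro j _
    have h1 := RS.lam_simple_ge v r hmax j
    have h2 : (0:ℝ) ≤ (c j : ℝ) := Nat.cast_nonneg _
    nlinarith
  have hcompl := RS.lam_compl_ge v r hmax hμ'.1 hμ'.2
  have hsum_le : ∑ j, (c j : ℝ) ≤ ∑ j, (c j : ℝ) * RS.lamF v r (RS.simpleRoot j) :=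
    Finset.sum_le_sum hterm
  have hzero : ∑ j, (c j : ℝ) ≤ 0 := by linarith
  have hallz : ∀ j ∈ Finset.univ, (c j : ℝ) = 0 := by
    apply (Finset.sum_eq_zero_iff_of_nonneg (fun j _ => Nat.cast_nonneg _)).mp
    have : (0:ℝ) ≤ ∑ j, (c j : ℝ) := Finset.sum_nonneg fun j _ => Nat.cast_nonneg _
    linarith
  rw [hc, Finset.sum_eq_zero (fun j hj => by rw [hallz j hj, zero_smul]), add_zero]

/-- the identification `Ξ(I^w) = claimed set` -/
theorem xi_eq :
    RS.XiSet (RS.firstLayerIdeal v r) =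
      ((fun i => -v.symm (RS.simpleRoot i)) '' {i | ⟪RS.simpleRoot i, v r⟫ = 1}) ∪
        {μ | ⟪RS.θ, v r⟫ = 0 ∧ μ = v.symm RS.θ} := by
  have hθΔ := RS.pos_mem_delta RS.θ_mem
  have hθ1 := RS.pos_htF RS.θ_mem
  ext μ
  simp only [XiSet, Set.mem_sep_iff, Set.mem_diff, Set.mem_union, Set.mem_image,
    Set.mem_setOf_eq]
  constructor
  · rintro ⟨⟨hpos, hni⟩, hmaxl⟩
    have hμΔ := RS.pos_mem_delta hpos
    rcases (RS.mem_compl_iff v r hmax hpos).mp hni with hs | ⟨hs, hneg⟩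
    · -- A-part : ν = v μ ∈ Z
      have hν : v μ ∈ RS.pos := RS.dom_pos_zero v r hmax hpos hs
      have hval : ⟪v μ, v r⟫ = 0 := by rw [RS.map_inner v r hmax]; exact hs
      by_cases hθe : v μ = RS.θ
      · right
        refine ⟨by rw [← hθe]; exact hval, ?_⟩
        rw [← hθe, LinearEquiv.symm_apply_apply]
      · exfalso
        obtain ⟨κ, hκ, hroot, hor⟩ := RS.k2 (v r) (RS.max_simple v r hmax)
          (RS.max_theta v r hmax) (RS.xint v r hmax) hν hval hθe
        have hκΔ := RS.pos_mem_delta hκ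
        rcases hor with hκ1 | hsum0
        · -- B-type bigger element
          set μ' := -v.symm κ with hμ'def
          have hμ'pos : μ' ∈ RS.pos := RS.x2 v r hmax hκΔ (le_of_eq hκ1.symm)
          have hvμ' : v μ' = -κ := by rw [hμ'def, map_neg, LinearEquiv.apply_symm_apply]
          have hμ'r : ⟪μ', r⟫ = -1 := by
            rw [hμ'def, inner_neg_left, RS.symm_inner v r hmax, hκ1]
          have hμ'ni : μ' ∉ RS.firstLayerIdeal v r := by
            rw [RS.mem_compl_iff v r hmax hμ'pos]
            right
            refine ⟨hμ'r, ?_⟩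
            rw [hvμ', neg_neg]
            exact hκ
          have hdiffval : ⟪v μ + κ, v r⟫ = 1 := by
            rw [inner_add_left, hval, hκ1]; ring
          have hdiff : -v.symm (v μ + κ) ∈ RS.pos :=
            RS.x2 v r hmax hroot (le_of_eq hdiffval.symm)
          have hdiffeq : μ' - μ = -v.symm (v μ + κ) := by
            rw [hμ'def, map_add, LinearEquiv.symm_apply_apply]
            abel
          have hrle : RS.rootLe μ μ' := by
            apply RS.rootLe_of_pos_diff
            rw [hdiffeq]
            exact RS.pos_natC hdiff
          have := hmaxl μ' ⟨hμ'pos, hμ'ni⟩ hrle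
          apply RS.pos_ne_zero hdiff
          rw [← hdiffeq, ← this, sub_self]
        · -- A-type bigger element
          have hsumpos : v μ + κ ∈ RS.pos := RS.pos_add_pos_mem hν hκ hroot
          set μ' := v.symm (v μ + κ) with hμ'def
          have hμ'pos : μ' ∈ RS.pos := RS.x3 v r hmax hsumpos hsum0
          have hμ'r : ⟪μ', r⟫ = 0 := by
            rw [hμ'def, RS.symm_inner v r hmax]; exact hsum0
          have hμ'ni : μ' ∉ RS.firstLayerIdeal v r := by
            rw [RS.mem_compl_iff v r hmax hμ'pos]
            exact Or.inl hμ'r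
          have hκ0 : ⟪κ, v r⟫ = 0 := by
            have : ⟪v μ + κ, v r⟫ = ⟪v μ, v r⟫ + ⟪κ, v r⟫ := inner_add_left _ _ _
            rw [hsum0, hval] at this
            linarith
          have hdiff : v.symm κ ∈ RS.pos := RS.x3 v r hmax hκ hκ0
          have hdiffeq : μ' - μ = v.symm κ := by
            rw [hμ'def, map_add, LinearEquiv.symm_apply_apply]
            abel
          have hrle : RS.rootLe μ μ' := by
            apply RS.rootLe_of_pos_diff
            rw [hdiffeq]
            exact RS.pos_natC hdiff
          have := hmaxl μ' ⟨hμ'pos, hμ'ni⟩ hrle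
          apply RS.pos_ne_zero hdiff
          rw [← hdiffeq, ← this, sub_self]
    · -- B-part : ν = -v μ ∈ O
      have hν : -v μ ∈ RS.pos := hneg
      have hval : ⟪-v μ, v r⟫ = 1 := by
        rw [inner_neg_left, RS.map_inner v r hmax, hs]; ring
      have hμeq : μ = -v.symm (-v μ) := by
        rw [map_neg, LinearEquiv.symm_apply_apply, neg_neg]
      by_cases hsim : ∃ i, -v μ = RS.simpleRoot i
      · obtain ⟨i, hi⟩ := hsim
        left
        exact ⟨i, by rw [← hi]; exact hval, by rw [← hi]; exact hμeq.symm⟩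
      · exfalso
        push_neg at hsim
        obtain ⟨σ, τ, hσ, hτ, hsplit, hσv⟩ := RS.k1 (v r) (RS.max_simple v r hmax)
          (RS.max_theta v r hmax) (RS.xint v r hmax) hν hval hsim
        set μ' := -v.symm σ with hμ'def
        have hσΔ := RS.pos_mem_delta hσ
        have hμ'pos : μ' ∈ RS.pos := RS.x2 v r hmax hσΔ (le_of_eq hσv.symm)
        have hμ'r : ⟪μ', r⟫ = -1 := by
          rw [hμ'def, inner_neg_left, RS.symm_inner v r hmax, hσv]
        have hvμ' : v μ' = -σ := by rw [hμ'def, map_neg, LinearEquiv.apply_symm_apply]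
        have hμ'ni : μ' ∉ RS.firstLayerIdeal v r := by
          rw [RS.mem_compl_iff v r hmax hμ'pos]
          right
          exact ⟨hμ'r, by rw [hvμ', neg_neg]; exact hσ⟩
        have hτ0 : ⟪τ, v r⟫ = 0 := by
          have : ⟪-v μ, v r⟫ = ⟪σ, v r⟫ + ⟪τ, v r⟫ := by rw [hsplit, inner_add_left]
          rw [hval, hσv] at this
          linarith
        have hdiff : v.symm τ ∈ RS.pos := RS.x3 v r hmax hτ hτ0
        have hdiffeq : μ' - μ = v.symm τ := by
          have hτeq : τ = -v μ - σ := by rw [hsplit]; abel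
          rw [hμ'def, hτeq, map_sub, map_neg, LinearEquiv.symm_apply_apply]
          abel
        have hrle : RS.rootLe μ μ' := by
          apply RS.rootLe_of_pos_diff
          rw [hdiffeq]
          exact RS.pos_natC hdiff
        have := hmaxl μ' ⟨hμ'pos, hμ'ni⟩ hrle
        apply RS.pos_ne_zero hdiff
        rw [← hdiffeq, ← this, sub_self]
  · intro h
    have hmain : μ ∈ RS.pos ∧ μ ∉ RS.firstLayerIdeal v r ∧
        RS.lamF v r (-μ) + (RS.htF RS.θ + 1) = 1 := by
      rcases h with ⟨i, hi, rfl⟩ | ⟨hθv, rfl⟩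
      · have hpos : -v.symm (RS.simpleRoot i) ∈ RS.pos :=
          RS.x2 v r hmax (RS.simpleRoot_mem i) (le_of_eq hi.symm)
        refine ⟨hpos, ?_, ?_⟩
        · rw [RS.mem_compl_iff v r hmax hpos]
          right
          constructor
          · rw [inner_neg_left, RS.symm_inner v r hmax, hi]
          · rw [map_neg, LinearEquiv.apply_symm_apply, neg_neg]
            exact RS.simple_pos i
        · rw [neg_neg, RS.lamF_apply, LinearEquiv.apply_symm_apply, RS.htF_simple,
            real_inner_comm (v.symm (RS.simpleRoot i)) r, RS.symm_inner v r hmax, hi]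
          ring
      · have hpos : v.symm RS.θ ∈ RS.pos := RS.x3 v r hmax RS.θ_mem hθv
        refine ⟨hpos, ?_, ?_⟩
        · rw [RS.mem_compl_iff v r hmax hpos]
          left
          rw [RS.symm_inner v r hmax]
          exact hθv
        · rw [RS.lamF_apply, map_neg, LinearEquiv.apply_symm_apply, map_neg,
            inner_neg_right, real_inner_comm (v.symm RS.θ) r,
            RS.symm_inner v r hmax, hθv]
          ring
    exact ⟨⟨hmain.1, hmain.2.1⟩, RS.xi_max_aux v r hmax hmain.2.2⟩

theorem xi_ncard :
    (RS.XiSet (RS.firstLayerIdeal v r)).ncard = RS.dmaxFaceCodim (v r) := by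
  rw [RS.xi_eq v r hmax]
  have hinj : Function.Injective (fun i => -v.symm (RS.simpleRoot i)) := by
    intro i j hij
    simp only [neg_inj] at hij
    exact RS.simpleRoot_indep.injective (v.symm.injective hij)
  have hA : {i : Fin p | ⟪v r, RS.simpleRoot i⟫ = 1}
      = {i : Fin p | ⟪RS.simpleRoot i, v r⟫ = 1} := by
    ext i
    simp only [Set.mem_setOf_eq]
    rw [real_inner_comm]
  have hS1card : ((fun i => -v.symm (RS.simpleRoot i)) ''
      {i | ⟪RS.simpleRoot i, v r⟫ = 1}).ncard
      = ({i : Fin p | ⟪RS.simpleRoot i, v r⟫ = 1}).ncard :=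
    Set.ncard_image_of_injective _ hinj
  have hfin1 : ((fun i => -v.symm (RS.simpleRoot i)) ''
      {i | ⟪RS.simpleRoot i, v r⟫ = 1}).Finite :=
    Set.Finite.image _ (Set.toFinite _)
  rw [dmaxFaceCodim, hA]
  by_cases hθv : ⟪RS.θ, v r⟫ = 0
  · have hS2 : {μ | ⟪RS.θ, v r⟫ = 0 ∧ μ = v.symm RS.θ} = {v.symm RS.θ} := by
      ext μ
      simp [hθv]
    rw [hS2]
    have hdisj : Disjoint ((fun i => -v.symm (RS.simpleRoot i)) ''
        {i | ⟪RS.simpleRoot i, v r⟫ = 1}) ({v.symm RS.θ} : Set V) := by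
      rw [Set.disjoint_singleton_right]
      rintro ⟨i, hi, heq⟩
      have h2 := congrArg v heq
      rw [map_neg, LinearEquiv.apply_symm_apply, LinearEquiv.apply_symm_apply] at h2
      apply RS.not_pos_neg RS.θ_mem
      rw [← h2, neg_neg]
      exact RS.simple_pos i
    rw [Set.ncard_union_eq hdisj hfin1 (Set.finite_singleton _), hS1card,
      Set.ncard_singleton,
      if_pos (show ⟪v r, RS.θ⟫ = 0 by rw [real_inner_comm RS.θ (v r)]; exact hθv)]
  · have hS2 : {μ | ⟪RS.θ, v r⟫ = 0 ∧ μ = v.symm RS.θ} = (∅ : Set V) := by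
      ext μ
      simp [hθv]
    rw [hS2, Set.union_empty, hS1card,
      if_neg (show ¬ ⟪v r, RS.θ⟫ = 0 from
        fun hc => hθv (by rw [real_inner_comm (v r) RS.θ]; exact hc)),
      add_zero]

end MaxPair2

end RootSystemData

/-- Let `w = v·t_r ∈ Ŵ_max` with first layer ideal `I^w`, and
`Ξ(I^w)` the set of maximal elements of `Δ⁺ \ I^w` w.r.t. `≼`. Let
`D_max = {x : (x,α) ≤ 1 ∀α ∈ Π, (x,θ) ≥ 0}`. Then `#Ξ(I^w) = k` iff `v(r)` lies on a
face of codimension `k` of the simplex `D_max` (i.e. `v(r) ∈ D_max` and exactly `k` of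
the `p + 1` defining constraints of `D_max` are active at `v(r)`). -/
theorem statement3 {V : Type*} [NormedAddCommGroup V] [InnerProductSpace ℝ V] {p : ℕ}
    (RS : RootSystemData V p) (v : V ≃ₗ[ℝ] V) (r : V)
    (hmax : RS.IsMaximalPair v r) (k : ℕ) :
    (RS.XiSet (RS.firstLayerIdeal v r)).ncard = k ↔
      (v r ∈ {x : V | (∀ i, ⟪x, RS.simpleRoot i⟫ ≤ 1) ∧ 0 ≤ ⟪x, RS.θ⟫} ∧
        RS.dmaxFaceCodim (v r) = k) := by
  have hmem : v r ∈ {x : V | (∀ i, ⟪x, RS.simpleRoot i⟫ ≤ 1) ∧ 0 ≤ ⟪x, RS.θ⟫} := by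
    constructor
    · intro i
      rw [real_inner_comm (RS.simpleRoot i) (v r)]
      exact RS.max_simple v r hmax i
    · rw [real_inner_comm RS.θ (v r)]
      exact RS.max_theta v r hmax
  have hcount := RS.xi_ncard v r hmax
  constructor
  · intro h
    exact ⟨hmem, by rw [← hcount]; exact h⟩
  · rintro ⟨-, h⟩
    rw [hcount]
    exact h
end
end

section
/- Let D^(s)_min = {x ∈ V : (x,α) ≥ −1 for α ∈ Π_s, (x,α) ≥ 0 for α ∈ Π_l, and (x,θ) ≤ 1}. Then: (1) an element w = v·t_r ∈ Ŵ is s-minimal if and only if w is dominant and v(r) ∈ D^(s)_min ∩ Q∨; (2) the map Ŵ^(s)_min → D^(s)_min ∩ Q∨ sending w = v·t_r to v(r) is a bijection. -/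
open scoped RealInnerProductSpace
open Module

noncomputable section

variable {V : Type*} [NormedAddCommGroup V] [InnerProductSpace ℝ V]

section Stmt7Aux

variable {V : Type*} [NormedAddCommGroup V] [InnerProductSpace ℝ V]

lemma sRefl_apply (α x : V) : sRefl α x = x - (2 * ⟪α, x⟫ / ⟪α, α⟫) • α := rfl

lemma inner_self_pos' {x : V} (h : x ≠ 0) : 0 < ⟪x, x⟫ :=
  lt_of_le_of_ne real_inner_self_nonneg (Ne.symm (inner_self_ne_zero.mpr h))

lemma inner_sRefl (α x y : V) : ⟪sRefl α x, sRefl α y⟫ = ⟪x, y⟫ := by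
  by_cases h : α = 0
  · simp [sRefl_apply, h]
  · have hs : ⟪α, α⟫ ≠ 0 := inner_self_ne_zero.mpr h
    rw [sRefl_apply, sRefl_apply, inner_sub_left, inner_sub_right, inner_sub_right,
      real_inner_smul_left, real_inner_smul_left, real_inner_smul_right,
      real_inner_smul_right, real_inner_comm α x]
    field_simp
    ring

lemma sRefl_sRefl (α x : V) : sRefl α (sRefl α x) = x := reflFun_involutive α x

lemma sRefl_inv (α : V) : (sRefl α)⁻¹ = sRefl α := by
  ext x; rfl

lemma sRefl_mul_self (α : V) : sRefl α * sRefl α = 1 := by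
  ext x; exact sRefl_sRefl α x

lemma sRefl_neg (α : V) : sRefl (-α) = sRefl α := by
  ext x
  show reflFun (-α) x = reflFun α x
  simp only [reflFun, inner_neg_left, inner_neg_neg, inner_neg_right, neg_neg, smul_neg,
    neg_smul]
  rw [show 2 * -⟪α, x⟫ / ⟪α, α⟫ = -(2 * ⟪α, x⟫ / ⟪α, α⟫) by ring, neg_smul, neg_neg]

lemma sRefl_self {α : V} (h : α ≠ 0) : sRefl α α = -α := by
  have hs : ⟪α, α⟫ ≠ 0 := inner_self_ne_zero.mpr h
  rw [sRefl_apply]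
  rw [show 2 * ⟪α, α⟫ / ⟪α, α⟫ = 2 by field_simp]
  module

lemma conj_sRefl (u : V ≃ₗ[ℝ] V) (hu : ∀ x y, ⟪u x, u y⟫ = ⟪x, y⟫) (α : V) :
    u * sRefl α * u⁻¹ = sRefl (u α) := by
  ext x
  show u (sRefl α (u.symm x)) = sRefl (u α) x
  rw [sRefl_apply, sRefl_apply, map_sub, map_smul,
    LinearEquiv.apply_symm_apply]
  congr 2
  · have h1 : ⟪u α, x⟫ = ⟪α, u.symm x⟫ := by
      conv_lhs => rw [show x = u (u.symm x) from (LinearEquiv.apply_symm_apply u x).symm]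
      exact hu α (u.symm x)
    rw [h1, hu α α]

variable {p : ℕ}

/-- Bundle of stability properties of Weyl group elements. -/
def GoodEquiv (RS : RootSystemData V p) (v : V ≃ₗ[ℝ] V) : Prop :=
  (∀ x y : V, ⟪v x, v y⟫ = ⟪x, y⟫) ∧ (∀ β ∈ RS.Δ, v β ∈ RS.Δ) ∧
    (∀ x ∈ RS.corootLattice, v x ∈ RS.corootLattice)

lemma good_one (RS : RootSystemData V p) : GoodEquiv RS 1 :=
  ⟨fun _ _ => rfl, fun _ hβ => hβ, fun _ hx => hx⟩

lemma good_mul {RS : RootSystemData V p} {g h : V ≃ₗ[ℝ] V} (hg : GoodEquiv RS g)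
    (hh : GoodEquiv RS h) : GoodEquiv RS (g * h) :=
  ⟨fun x y => (hg.1 (h x) (h y)).trans (hh.1 x y),
   fun β hβ => hg.2.1 _ (hh.2.1 β hβ),
   fun x hx => hg.2.2 _ (hh.2.2 x hx)⟩

lemma good_sRefl (RS : RootSystemData V p) {α : V} (hα : α ∈ RS.Δ) :
    GoodEquiv RS (sRefl α) := by
  refine ⟨inner_sRefl α, fun β hβ => RS.reflect_mem α hα β hβ, ?_⟩
  intro x hx
  induction hx using AddSubgroup.closure_induction with
  | mem y hy =>
      obtain ⟨β, hβ, rfl⟩ := hy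
      have key : sRefl α (corootVec β) = corootVec (sRefl α β) := by
        rw [corootVec, corootVec, map_smul, inner_sRefl]
      rw [key]
      exact AddSubgroup.subset_closure ⟨sRefl α β, RS.reflect_mem α hα β hβ, rfl⟩
  | zero => rw [map_zero]; exact zero_mem _
  | add y z _ _ ihy ihz => rw [map_add]; exact add_mem ihy ihz
  | neg y _ ihy => rw [map_neg]; exact neg_mem ihy

lemma weyl_good {RS : RootSystemData V p} {v : V ≃ₗ[ℝ] V} (hv : v ∈ RS.weylGroup) :
    GoodEquiv RS v := by
  have hv' : v ∈ Subgroup.closure {w : V ≃ₗ[ℝ] V | ∃ α ∈ RS.Δ, w = sRefl α} := hv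
  have : GoodEquiv RS v ∧ GoodEquiv RS v⁻¹ := by
    induction hv' using Subgroup.closure_induction with
    | mem w hw =>
        obtain ⟨α, hα, rfl⟩ := hw
        exact ⟨good_sRefl RS hα, by rw [sRefl_inv]; exact good_sRefl RS hα⟩
    | one => exact ⟨good_one RS, by rw [inv_one]; exact good_one RS⟩
    | mul g h hg hh ihg ihh =>
        exact ⟨good_mul (ihg hg).1 (ihh hh).1,
          by rw [mul_inv_rev]; exact good_mul (ihh hh).2 (ihg hg).2⟩
    | inv g hg ih => exact ⟨(ih hg).2, by rw [inv_inv]; exact (ih hg).1⟩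
  exact this.1

lemma weyl_inner {RS : RootSystemData V p} {v : V ≃ₗ[ℝ] V} (hv : v ∈ RS.weylGroup)
    (x y : V) : ⟪v x, v y⟫ = ⟪x, y⟫ := (weyl_good hv).1 x y

lemma weyl_root {RS : RootSystemData V p} {v : V ≃ₗ[ℝ] V} (hv : v ∈ RS.weylGroup)
    {β : V} (hβ : β ∈ RS.Δ) : v β ∈ RS.Δ := (weyl_good hv).2.1 β hβ

lemma weyl_coroot {RS : RootSystemData V p} {v : V ≃ₗ[ℝ] V} (hv : v ∈ RS.weylGroup)
    {x : V} (hx : x ∈ RS.corootLattice) : v x ∈ RS.corootLattice := (weyl_good hv).2.2 x hx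

lemma sRefl_mem_weyl (RS : RootSystemData V p) {α : V} (hα : α ∈ RS.Δ) :
    sRefl α ∈ RS.weylGroup := Subgroup.subset_closure ⟨α, hα, rfl⟩

lemma weyl_inner_symm {RS : RootSystemData V p} {v : V ≃ₗ[ℝ] V} (hv : v ∈ RS.weylGroup)
    (x y : V) : ⟪v.symm x, y⟫ = ⟪x, v y⟫ := by
  conv_rhs => rw [show x = v (v.symm x) from (LinearEquiv.apply_symm_apply v x).symm]
  exact (weyl_inner hv (v.symm x) y).symm

variable {RS : RootSystemData V p}

lemma pos_subset (RS : RootSystemData V p) : RS.pos ⊆ RS.Δ := by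
  rw [RS.pos_def]; exact fun β hβ => hβ.1

lemma indep_real {g : Fin p → ℝ} (hg : ∑ i, g i • RS.simpleRoot i = 0) : ∀ i, g i = 0 :=
  Fintype.linearIndependent_iff.mp RS.simpleRoot_indep g hg

lemma mem_pos_coeff {β : V} (hβ : β ∈ RS.pos) :
    ∃ c : Fin p → ℕ, β = ∑ i, (c i : ℝ) • RS.simpleRoot i := by
  rw [RS.pos_def] at hβ; exact hβ.2

lemma mem_pos_of {β : V} (hβ : β ∈ RS.Δ) (c : Fin p → ℕ)
    (h : β = ∑ i, (c i : ℝ) • RS.simpleRoot i) : β ∈ RS.pos := by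
  rw [RS.pos_def]; exact ⟨hβ, c, h⟩

lemma pos_neg_not {β : V} (h1 : β ∈ RS.pos) (h2 : -β ∈ RS.pos) : False := by
  obtain ⟨c, hc⟩ := mem_pos_coeff h1
  obtain ⟨d, hd⟩ := mem_pos_coeff h2
  have hsum : ∑ i, ((c i : ℝ) + (d i : ℝ)) • RS.simpleRoot i = 0 := by
    simp only [add_smul, Finset.sum_add_distrib, ← hc, ← hd, add_neg_cancel]
  have hz := indep_real hsum
  have : β = 0 := by
    rw [hc]
    apply Finset.sum_eq_zero
    intro i _
    have : (c i : ℝ) = 0 := by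
      have := hz i
      have hcn : (0:ℝ) ≤ (c i : ℝ) := Nat.cast_nonneg _
      have hdn : (0:ℝ) ≤ (d i : ℝ) := Nat.cast_nonneg _
      linarith
    rw [this, zero_smul]
  exact RS.zero_notMem (this ▸ pos_subset RS h1)

lemma neg_mem_pos {β : V} (hβ : β ∈ RS.Δ) (h : β ∉ RS.pos) : -β ∈ RS.pos :=
  (RS.pos_or_neg β hβ).resolve_left h

lemma sum_ite_smul (i : Fin p) (k : ℝ) :
    ∑ j, (if j = i then k else 0) • RS.simpleRoot j = k • RS.simpleRoot i := by
  rw [Finset.sum_eq_single i]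
  · simp
  · intro j _ hj; rw [if_neg hj, zero_smul]
  · intro h; exact absurd (Finset.mem_univ i) h

lemma simple_ne_zero (i : Fin p) : RS.simpleRoot i ≠ 0 := by
  intro h
  exact RS.zero_notMem (h ▸ RS.simpleRoot_mem i)

lemma simple_mem_pos (i : Fin p) : RS.simpleRoot i ∈ RS.pos := by
  rcases RS.pos_or_neg _ (RS.simpleRoot_mem i) with h | h
  · exact h
  · exfalso
    obtain ⟨d, hd⟩ := mem_pos_coeff h
    have hsum : ∑ j, ((d j : ℝ) + (if j = i then 1 else 0)) • RS.simpleRoot j = 0 := by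
      simp only [add_smul, Finset.sum_add_distrib, ← hd, sum_ite_smul, one_smul,
        neg_add_cancel]
    have := indep_real hsum i
    rw [if_pos rfl] at this
    have : (0:ℝ) ≤ (d i : ℝ) := Nat.cast_nonneg _
    linarith

lemma simple_refl_pos {β : V} {i : Fin p} (hβ : β ∈ RS.pos) (hne : β ≠ RS.simpleRoot i) :
    sRefl (RS.simpleRoot i) β ∈ RS.pos ∧ sRefl (RS.simpleRoot i) β ≠ RS.simpleRoot i := by
  set α := RS.simpleRoot i with hα
  set k : ℝ := 2 * ⟪α, β⟫ / ⟪α, α⟫ with hk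
  have hβΔ : β ∈ RS.Δ := pos_subset RS hβ
  have hγΔ : sRefl α β ∈ RS.Δ := RS.reflect_mem α (RS.simpleRoot_mem i) β hβΔ
  have hγeq : sRefl α β = β - k • α := sRefl_apply α β
  obtain ⟨c, hc⟩ := mem_pos_coeff hβ
  -- some coordinate other than i is nonzero
  have hcj : ∃ j, j ≠ i ∧ c j ≠ 0 := by
    by_contra hno
    push_neg at hno
    have hβi : β = (c i : ℝ) • α := by
      rw [hc, Finset.sum_eq_single i]
      · intro j _ hj; rw [show c j = 0 from hno j hj]; simp
      · intro h; exact absurd (Finset.mem_univ i) h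
    have := RS.reduced α (RS.simpleRoot_mem i) (c i : ℝ) (by rw [← hβi]; exact hβΔ)
    rcases this with h1 | h1
    · exact hne (by rw [hβi, h1, one_smul])
    · have : (0:ℝ) ≤ (c i : ℝ) := Nat.cast_nonneg _
      rw [h1] at this; linarith
  obtain ⟨j, hji, hcjne⟩ := hcj
  have hγpos : sRefl α β ∈ RS.pos := by
    by_contra hγn
    obtain ⟨d, hd⟩ := mem_pos_coeff (neg_mem_pos hγΔ hγn)
    have hsum : ∑ l, ((c l : ℝ) + (d l : ℝ) - (if l = i then k else 0)) •
        RS.simpleRoot l = 0 := by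
      simp only [sub_smul, add_smul, Finset.sum_sub_distrib, Finset.sum_add_distrib,
        ← hc, ← hd, sum_ite_smul]
      rw [hγeq, ← hα]
      module
    have := indep_real hsum j
    rw [if_neg hji] at this
    have h1 : (0:ℝ) ≤ (d j : ℝ) := Nat.cast_nonneg _
    have h2 : (0:ℝ) < (c j : ℝ) := by
      have := Nat.pos_of_ne_zero hcjne
      exact_mod_cast this
    linarith
  refine ⟨hγpos, ?_⟩
  intro heq
  have : β = -α := by
    have := congrArg (sRefl α) heq
    rw [sRefl_sRefl, sRefl_self (simple_ne_zero i)] at this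
    exact this
  rw [this] at hβ
  exact pos_neg_not (simple_mem_pos i) hβ

/-- The subgroup generated by the simple reflections. -/
def W0 (RS : RootSystemData V p) : Subgroup (V ≃ₗ[ℝ] V) :=
  Subgroup.closure {w : V ≃ₗ[ℝ] V | ∃ i : Fin p, w = sRefl (RS.simpleRoot i)}

lemma sRefl_pos_mem_W0 : ∀ n : ℕ, ∀ β ∈ RS.pos, ∀ c : Fin p → ℕ,
    β = ∑ i, (c i : ℝ) • RS.simpleRoot i → ∑ i, c i = n → sRefl β ∈ W0 RS := by
  intro n
  induction n using Nat.strong_induction_on with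
  | _ n ih =>
  intro β hβ c hc hn
  have hβΔ : β ∈ RS.Δ := pos_subset RS hβ
  have hβ0 : β ≠ 0 := fun h => RS.zero_notMem (h ▸ hβΔ)
  have hself : 0 < ⟪β, β⟫ := inner_self_pos' hβ0
  have hexp : ⟪β, β⟫ = ∑ i, (c i : ℝ) * ⟪β, RS.simpleRoot i⟫ := by
    calc ⟪β, β⟫ = ⟪β, ∑ i, (c i : ℝ) • RS.simpleRoot i⟫ := by rw [← hc]
    _ = ∑ i, (c i : ℝ) * ⟪β, RS.simpleRoot i⟫ := by
        rw [inner_sum]; exact Finset.sum_congr rfl fun i _ => real_inner_smul_right _ _ _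
  obtain ⟨i, hprod⟩ : ∃ i, 0 < (c i : ℝ) * ⟪β, RS.simpleRoot i⟫ := by
    by_contra hno
    push_neg at hno
    have : ⟪β, β⟫ ≤ 0 := hexp ▸ Finset.sum_nonpos (fun i _ => hno i)
    linarith
  have hip : 0 < ⟪β, RS.simpleRoot i⟫ := by
    rcases lt_or_ge 0 ⟪β, RS.simpleRoot i⟫ with h | h
    · exact h
    · have := mul_nonpos_of_nonneg_of_nonpos (Nat.cast_nonneg (c i)) h
      linarith
  by_cases hβa : β = RS.simpleRoot i
  · exact Subgroup.subset_closure ⟨i, by rw [hβa]⟩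
  · have hγpos : sRefl (RS.simpleRoot i) β ∈ RS.pos := (simple_refl_pos hβ hβa).1
    set k : ℝ := 2 * ⟪RS.simpleRoot i, β⟫ / ⟪RS.simpleRoot i, RS.simpleRoot i⟫ with hk
    have hk0 : 0 < k := by
      apply div_pos
      · rw [real_inner_comm]; linarith
      · exact inner_self_pos' (simple_ne_zero i)
    have hγeq : sRefl (RS.simpleRoot i) β = β - k • RS.simpleRoot i :=
      sRefl_apply (RS.simpleRoot i) β
    obtain ⟨d, hd⟩ := mem_pos_coeff hγpos
    have hdj : ∀ j, (d j : ℝ) = (c j : ℝ) - (if j = i then k else 0) := by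
      have hsum : ∑ j, ((d j : ℝ) - ((c j : ℝ) - (if j = i then k else 0))) •
          RS.simpleRoot j = 0 := by
        simp only [sub_smul, Finset.sum_sub_distrib, ← hd, ← hc, sum_ite_smul, hγeq]
        module
      intro j
      have := indep_real hsum j
      linarith
    have hsumd : (∑ j, (d j : ℝ)) = (n : ℝ) - k := by
      rw [Finset.sum_congr rfl fun j _ => hdj j, Finset.sum_sub_distrib]
      congr 1
      · rw [← hn]; push_cast; rfl
      · rw [Finset.sum_ite_eq' Finset.univ i fun _ => k, if_pos (Finset.mem_univ i)]
    have hmn : ∑ j, d j < n := by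
      have h1 : ((∑ j, d j : ℕ) : ℝ) < (n : ℝ) := by
        push_cast
        rw [hsumd]
        linarith
      exact_mod_cast h1
    have hsγ : sRefl (sRefl (RS.simpleRoot i) β) ∈ W0 RS := ih _ hmn _ hγpos d hd rfl
    have hconj := conj_sRefl (sRefl (RS.simpleRoot i)) (inner_sRefl (RS.simpleRoot i))
      (sRefl (RS.simpleRoot i) β)
    rw [sRefl_sRefl] at hconj
    rw [← hconj]
    exact mul_mem (mul_mem (Subgroup.subset_closure ⟨i, rfl⟩) hsγ)
      (inv_mem (Subgroup.subset_closure ⟨i, rfl⟩))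

lemma sRefl_mem_W0 {β : V} (hβ : β ∈ RS.Δ) : sRefl β ∈ W0 RS := by
  rcases RS.pos_or_neg β hβ with h | h
  · obtain ⟨c, hc⟩ := mem_pos_coeff h
    exact sRefl_pos_mem_W0 (∑ i, c i) β h c hc rfl
  · obtain ⟨c, hc⟩ := mem_pos_coeff h
    rw [← neg_neg β, sRefl_neg]
    exact sRefl_pos_mem_W0 (∑ i, c i) (-β) h c hc rfl

lemma weyl_le_W0 (RS : RootSystemData V p) : RS.weylGroup ≤ W0 RS := by
  rw [RootSystemData.weylGroup, Subgroup.closure_le]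
  rintro w ⟨α, hα, rfl⟩
  exact sRefl_mem_W0 hα

/-- Product of simple reflections given by a word. -/
def wprod (RS : RootSystemData V p) (l : List (Fin p)) : V ≃ₗ[ℝ] V :=
  (l.map fun i => sRefl (RS.simpleRoot i)).prod

lemma wprod_nil : wprod RS [] = 1 := rfl

lemma wprod_cons (i : Fin p) (l : List (Fin p)) :
    wprod RS (i :: l) = sRefl (RS.simpleRoot i) * wprod RS l := by
  simp [wprod]

lemma wprod_append (l l' : List (Fin p)) :
    wprod RS (l ++ l') = wprod RS l * wprod RS l' := by
  simp [wprod]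

lemma wprod_mem (l : List (Fin p)) : wprod RS l ∈ RS.weylGroup := by
  induction l with
  | nil => exact one_mem _
  | cons i l ih =>
      rw [wprod_cons]
      exact mul_mem (sRefl_mem_weyl RS (RS.simpleRoot_mem i)) ih

lemma wprod_inv (l : List (Fin p)) : (wprod RS l)⁻¹ = wprod RS l.reverse := by
  induction l with
  | nil => simp [wprod_nil]
  | cons i l ih =>
      rw [wprod_cons, mul_inv_rev, ih, sRefl_inv, List.reverse_cons, wprod_append]
      simp [wprod_cons, wprod_nil]

lemma exists_word {u : V ≃ₗ[ℝ] V} (hu : u ∈ W0 RS) : ∃ l : List (Fin p), u = wprod RS l := by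
  have hu' : u ∈ Subgroup.closure {w : V ≃ₗ[ℝ] V | ∃ i : Fin p, w = sRefl (RS.simpleRoot i)} := hu
  induction hu' using Subgroup.closure_induction with
  | mem w hw =>
      obtain ⟨i, rfl⟩ := hw
      exact ⟨[i], by rw [wprod_cons, wprod_nil, mul_one]⟩
  | one => exact ⟨[], rfl⟩
  | mul g h hg hh ihg ihh =>
      obtain ⟨l1, h1⟩ := ihg hg
      obtain ⟨l2, h2⟩ := ihh hh
      exact ⟨l1 ++ l2, by rw [wprod_append, h1, h2]⟩
  | inv g hg ih =>
      obtain ⟨l, h⟩ := ih hg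
      exact ⟨l.reverse, by rw [h, wprod_inv]⟩

lemma deletion : ∀ l : List (Fin p), ∀ j : Fin p,
    wprod RS l (RS.simpleRoot j) ∉ RS.pos →
    ∃ l' : List (Fin p), l'.length + 1 = l.length ∧
      wprod RS l * sRefl (RS.simpleRoot j) = wprod RS l' := by
  intro l
  induction l with
  | nil =>
      intro j h
      exact absurd (simple_mem_pos j) (by simpa [wprod_nil] using h)
  | cons i l ih =>
      intro j h
      have happ : wprod RS (i :: l) (RS.simpleRoot j)
          = sRefl (RS.simpleRoot i) (wprod RS l (RS.simpleRoot j)) := by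
        rw [wprod_cons]; rfl
      by_cases hγ : wprod RS l (RS.simpleRoot j) ∈ RS.pos
      · have hγa : wprod RS l (RS.simpleRoot j) = RS.simpleRoot i := by
          by_contra hne
          exact h (happ ▸ (simple_refl_pos hγ hne).1)
        have hconj := conj_sRefl (wprod RS l) (weyl_inner (wprod_mem l)) (RS.simpleRoot j)
        rw [hγa] at hconj
        refine ⟨l, rfl, ?_⟩
        rw [wprod_cons, ← hconj]
        simp only [mul_assoc, inv_mul_cancel_left]
        rw [sRefl_mul_self, mul_one]
      · obtain ⟨l', hlen, heq⟩ := ih j hγ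
        refine ⟨i :: l', by rw [List.length_cons, List.length_cons, hlen], ?_⟩
        rw [wprod_cons, wprod_cons, mul_assoc, heq]

lemma wprod_pos_preserving_eq_one : ∀ n : ℕ, ∀ l : List (Fin p), l.length ≤ n →
    (∀ β ∈ RS.pos, wprod RS l β ∈ RS.pos) → wprod RS l = 1 := by
  intro n
  induction n with
  | zero =>
      intro l hl _
      rw [List.eq_nil_of_length_eq_zero (Nat.le_zero.mp hl)]
      rfl
  | succ n ih =>
      intro l hl hpos
      rcases List.eq_nil_or_concat l with rfl | ⟨l₀, j, rfl⟩
      · rfl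
      · rw [List.concat_eq_append] at hl hpos ⊢
        have hu : wprod RS (l₀ ++ [j]) = wprod RS l₀ * sRefl (RS.simpleRoot j) := by
          rw [wprod_append, wprod_cons, wprod_nil, mul_one]
        have h1 : wprod RS (l₀ ++ [j]) (RS.simpleRoot j) ∈ RS.pos :=
          hpos _ (simple_mem_pos j)
        have h2 : wprod RS l₀ (RS.simpleRoot j) ∉ RS.pos := by
          intro hmem
          have hflip : wprod RS (l₀ ++ [j]) (RS.simpleRoot j)
              = -(wprod RS l₀ (RS.simpleRoot j)) := by
            rw [hu]
            show wprod RS l₀ (sRefl (RS.simpleRoot j) (RS.simpleRoot j)) = _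
            rw [sRefl_self (simple_ne_zero j), map_neg]
          rw [hflip] at h1
          exact pos_neg_not hmem h1
        obtain ⟨l', hlen, heq⟩ := deletion l₀ j h2
        have hrw : wprod RS (l₀ ++ [j]) = wprod RS l' := by rw [hu]; exact heq
        rw [hrw]
        apply ih l'
        · have : (l₀ ++ [j]).length = l₀.length + [j].length := List.length_append
          simp at hl
          omega
        · intro β hβ
          rw [← hrw]
          exact hpos β hβ

lemma weyl_pos_preserving_eq_one {u : V ≃ₗ[ℝ] V} (hu : u ∈ RS.weylGroup)
    (h : ∀ β ∈ RS.pos, u β ∈ RS.pos) : u = 1 := by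
  obtain ⟨l, rfl⟩ := exists_word (weyl_le_W0 RS hu)
  exact wprod_pos_preserving_eq_one l.length l le_rfl h

/-- The positive system determined by `x` (lexicographically: first `⟪·,x⟫ < 0`,
ties broken by `Δ⁺`). -/
def Dset (RS : RootSystemData V p) (x : V) : Set V :=
  {γ ∈ RS.Δ | ⟪γ, x⟫ < 0 ∨ (⟪γ, x⟫ = 0 ∧ γ ∈ RS.pos)}

lemma Dset_not_neg {x β : V} (hβ : β ∈ RS.Δ) (h : β ∈ Dset RS x) : -β ∉ Dset RS x := by
  rintro ⟨-, hcase⟩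
  obtain ⟨-, hcase'⟩ := h
  rw [inner_neg_left] at hcase
  rcases hcase' with h1 | ⟨h1, h2⟩ <;> rcases hcase with h3 | ⟨h3, h4⟩
  · linarith
  · linarith
  · linarith
  · exact pos_neg_not h2 h4

lemma Dset_neg_mem {x β : V} (hβ : β ∈ RS.Δ) (h : β ∉ Dset RS x) : -β ∈ Dset RS x := by
  refine ⟨RS.neg_mem β hβ, ?_⟩
  rw [inner_neg_left]
  rcases lt_trichotomy ⟪β, x⟫ 0 with h1 | h1 | h1
  · exact absurd ⟨hβ, Or.inl h1⟩ h
  · have hβp : β ∉ RS.pos := fun hp => h ⟨hβ, Or.inr ⟨h1, hp⟩⟩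
    exact Or.inr ⟨by rw [h1, neg_zero], neg_mem_pos hβ hβp⟩
  · exact Or.inl (by linarith)

lemma Dset_zero (RS : RootSystemData V p) : Dset RS 0 = RS.pos := by
  ext β
  constructor
  · rintro ⟨hβ, h | ⟨-, h⟩⟩
    · rw [inner_zero_right] at h; linarith
    · exact h
  · intro h
    exact ⟨pos_subset RS h, Or.inr ⟨inner_zero_right β, h⟩⟩

/-- The set of positive roots sent outside `D` by `v`. -/
def Mset (RS : RootSystemData V p) (D : Set V) (v : V ≃ₗ[ℝ] V) : Set V :=
  {β ∈ RS.pos | v β ∉ D}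

lemma Mset_finite (D : Set V) (v : V ≃ₗ[ℝ] V) : (Mset RS D v).Finite :=
  RS.finite.subset (fun β hβ => pos_subset RS hβ.1)

lemma Mset_step {D : Set V} (hD : ∀ β ∈ RS.Δ, β ∉ D → -β ∈ D) {v : V ≃ₗ[ℝ] V}
    (hv : v ∈ RS.weylGroup) {i : Fin p} (h : v (RS.simpleRoot i) ∉ D) :
    Mset RS D (v * sRefl (RS.simpleRoot i)) =
      sRefl (RS.simpleRoot i) '' (Mset RS D v \ {RS.simpleRoot i}) := by
  have hDneg : -(v (RS.simpleRoot i)) ∈ D :=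
    hD _ (weyl_root hv (RS.simpleRoot_mem i)) h
  ext β
  constructor
  · rintro ⟨hβpos, hβD⟩
    have happ : (v * sRefl (RS.simpleRoot i)) β = v (sRefl (RS.simpleRoot i) β) := rfl
    have hβne : β ≠ RS.simpleRoot i := by
      rintro rfl
      apply hβD
      rw [happ, sRefl_self (simple_ne_zero i), map_neg]
      exact hDneg
    obtain ⟨hγpos, hγne⟩ := simple_refl_pos hβpos hβne
    refine ⟨sRefl (RS.simpleRoot i) β, ⟨⟨hγpos, ?_⟩, hγne⟩, sRefl_sRefl _ _⟩
    rwa [happ] at hβD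
  · rintro ⟨γ, ⟨⟨hγpos, hγD⟩, hγne⟩, rfl⟩
    have hγne' : γ ≠ RS.simpleRoot i := hγne
    refine ⟨(simple_refl_pos hγpos hγne').1, ?_⟩
    show v (sRefl (RS.simpleRoot i) (sRefl (RS.simpleRoot i) γ)) ∉ D
    rwa [sRefl_sRefl]

lemma Mset_card_lt {D : Set V} (hD : ∀ β ∈ RS.Δ, β ∉ D → -β ∈ D) {v : V ≃ₗ[ℝ] V}
    (hv : v ∈ RS.weylGroup) {i : Fin p} (h : v (RS.simpleRoot i) ∉ D) :
    (Mset RS D (v * sRefl (RS.simpleRoot i))).ncard < (Mset RS D v).ncard := by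
  rw [Mset_step hD hv h,
    Set.ncard_image_of_injective _ (sRefl (RS.simpleRoot i)).injective]
  exact Set.ncard_diff_singleton_lt_of_mem ⟨simple_mem_pos i, h⟩ (Mset_finite D v)

lemma exists_adapted_aux {D : Set V} (hD : ∀ β ∈ RS.Δ, β ∉ D → -β ∈ D) :
    ∀ n : ℕ, ∀ v ∈ RS.weylGroup, (Mset RS D v).ncard ≤ n →
      ∃ v' ∈ RS.weylGroup, ∀ i, v' (RS.simpleRoot i) ∈ D := by
  intro n
  induction n with
  | zero =>
      intro v hv hcard
      by_cases hall : ∀ i, v (RS.simpleRoot i) ∈ D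
      · exact ⟨v, hv, hall⟩
      · push_neg at hall
        obtain ⟨i, hi⟩ := hall
        exfalso
        have : (Mset RS D v).Nonempty := ⟨RS.simpleRoot i, simple_mem_pos i, hi⟩
        have := (Set.ncard_pos (Mset_finite D v)).mpr this
        omega
  | succ n ih =>
      intro v hv hcard
      by_cases hall : ∀ i, v (RS.simpleRoot i) ∈ D
      · exact ⟨v, hv, hall⟩
      · push_neg at hall
        obtain ⟨i, hi⟩ := hall
        have hv' : v * sRefl (RS.simpleRoot i) ∈ RS.weylGroup :=
          mul_mem hv (sRefl_mem_weyl RS (RS.simpleRoot_mem i))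
        exact ih _ hv' (by have := Mset_card_lt hD hv hi; omega)

lemma exists_adapted {D : Set V} (hD : ∀ β ∈ RS.Δ, β ∉ D → -β ∈ D) :
    ∃ v ∈ RS.weylGroup, ∀ i, v (RS.simpleRoot i) ∈ D :=
  exists_adapted_aux hD (Mset RS D 1).ncard 1 (one_mem _) le_rfl

lemma image_pos_mem_Dset {x : V} {v : V ≃ₗ[ℝ] V} (hv : v ∈ RS.weylGroup)
    (h : ∀ i, v (RS.simpleRoot i) ∈ Dset RS x) {β : V} (hβ : β ∈ RS.pos) :
    v β ∈ Dset RS x := by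
  classical
  obtain ⟨c, hc⟩ := mem_pos_coeff hβ
  have hvβ : v β = ∑ i, (c i : ℝ) • v (RS.simpleRoot i) := by
    rw [hc, map_sum]; exact Finset.sum_congr rfl fun i _ => map_smul v _ _
  have hinner : ⟪v β, x⟫ = ∑ i, (c i : ℝ) * ⟪v (RS.simpleRoot i), x⟫ := by
    rw [hvβ, sum_inner]
    exact Finset.sum_congr rfl fun i _ => real_inner_smul_left _ _ _
  have hterm : ∀ i, (c i : ℝ) * ⟪v (RS.simpleRoot i), x⟫ ≤ 0 := by
    intro i
    rcases (h i).2 with h1 | ⟨h1, -⟩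
    · exact mul_nonpos_of_nonneg_of_nonpos (Nat.cast_nonneg _) h1.le
    · rw [h1, mul_zero]
  have hΔ : v β ∈ RS.Δ := weyl_root hv (pos_subset RS hβ)
  have hle : ⟪v β, x⟫ ≤ 0 := hinner ▸ Finset.sum_nonpos fun i _ => hterm i
  rcases lt_or_eq_of_le hle with hlt | heq0
  · exact ⟨hΔ, Or.inl hlt⟩
  · have hzero : ∀ i ∈ Finset.univ, (c i : ℝ) * ⟪v (RS.simpleRoot i), x⟫ = 0 :=
      (Finset.sum_eq_zero_iff_of_nonpos fun i _ => hterm i).mp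
        (by rw [← hinner]; exact heq0)
    have hposi : ∀ i, c i ≠ 0 → v (RS.simpleRoot i) ∈ RS.pos := by
      intro i hci
      rcases (h i).2 with h1 | ⟨-, h2⟩
      · exact absurd (hzero i (Finset.mem_univ i))
          (mul_ne_zero (Nat.cast_ne_zero.mpr hci) (ne_of_lt h1))
      · exact h2
    have hchoice : ∀ i, ∃ d : Fin p → ℕ,
        c i ≠ 0 → v (RS.simpleRoot i) = ∑ j, (d j : ℝ) • RS.simpleRoot j := by
      intro i
      by_cases hci : c i ≠ 0
      · obtain ⟨d, hd⟩ := mem_pos_coeff (hposi i hci); exact ⟨d, fun _ => hd⟩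
      · exact ⟨0, fun hcc => absurd hcc hci⟩
    choose d hdspec using hchoice
    have hvβ2 : v β = ∑ j, ((∑ i, c i * d i j : ℕ) : ℝ) • RS.simpleRoot j := by
      rw [hvβ]
      calc ∑ i, (c i : ℝ) • v (RS.simpleRoot i)
          = ∑ i, ∑ j, ((c i : ℝ) * (d i j : ℝ)) • RS.simpleRoot j := by
            apply Finset.sum_congr rfl
            intro i _
            by_cases hci : c i = 0
            · simp [hci]
            · rw [hdspec i hci, Finset.smul_sum]
              exact Finset.sum_congr rfl fun j _ => smul_smul _ _ _
        _ = ∑ j, ∑ i, ((c i : ℝ) * (d i j : ℝ)) • RS.simpleRoot j := Finset.sum_comm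
        _ = ∑ j, ((∑ i, c i * d i j : ℕ) : ℝ) • RS.simpleRoot j := by
            apply Finset.sum_congr rfl
            intro j _
            rw [← Finset.sum_smul]
            congr 1
            push_cast
            rfl
    exact ⟨hΔ, Or.inr ⟨heq0, mem_pos_of hΔ _ hvβ2⟩⟩

lemma unique_adapted {x : V} {v v' : V ≃ₗ[ℝ] V} (hv : v ∈ RS.weylGroup)
    (hv' : v' ∈ RS.weylGroup) (h : ∀ i, v (RS.simpleRoot i) ∈ Dset RS x)
    (h' : ∀ i, v' (RS.simpleRoot i) ∈ Dset RS x) : v = v' := by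
  have hu : v'⁻¹ * v ∈ RS.weylGroup := mul_mem (inv_mem hv') hv
  have hupos : ∀ β ∈ RS.pos, (v'⁻¹ * v) β ∈ RS.pos := by
    intro β hβ
    have h1 : v β ∈ Dset RS x := image_pos_mem_Dset hv h hβ
    have hγΔ : (v'⁻¹ * v) β ∈ RS.Δ := weyl_root hu (pos_subset RS hβ)
    by_contra hγn
    have h2 : -((v'⁻¹ * v) β) ∈ RS.pos := neg_mem_pos hγΔ hγn
    have h3 : v' (-((v'⁻¹ * v) β)) ∈ Dset RS x := image_pos_mem_Dset hv' h' h2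
    have h4 : v' (-((v'⁻¹ * v) β)) = -(v β) := by
      rw [map_neg]
      congr 1
      exact LinearEquiv.apply_symm_apply v' (v β)
    rw [h4] at h3
    exact Dset_not_neg (weyl_root hv (pos_subset RS hβ)) h1 h3
  have h1 : v'⁻¹ * v = 1 := weyl_pos_preserving_eq_one hu hupos
  have := inv_mul_eq_one.mp h1
  exact this.symm

lemma dominant_iff {v : V ≃ₗ[ℝ] V} {r : V} : RS.IsDominantPair v r ↔
    v ∈ RS.weylGroup ∧ r ∈ RS.corootLattice ∧
      ∀ i, v (RS.simpleRoot i) ∈ Dset RS (v r) := by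
  unfold RootSystemData.IsDominantPair
  refine and_congr_right fun hv => and_congr_right fun _ => forall_congr' fun i => ?_
  have hΔ : v (RS.simpleRoot i) ∈ RS.Δ := weyl_root hv (RS.simpleRoot_mem i)
  have hinner : ⟪RS.simpleRoot i, r⟫ = ⟪v (RS.simpleRoot i), v r⟫ := (weyl_inner hv _ _).symm
  simp only [affAct, RootSystemData.affPos, Set.mem_setOf_eq, zero_sub]
  constructor
  · rintro ⟨-, hcase⟩
    refine ⟨hΔ, ?_⟩
    rcases hcase with h1 | ⟨h1, h2⟩
    · left; rw [← hinner]; linarith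
    · right; exact ⟨by rw [← hinner]; linarith, h2⟩
  · rintro ⟨-, hcase⟩
    refine ⟨hΔ, ?_⟩
    rcases hcase with h1 | ⟨h1, h2⟩
    · left; rw [hinner] at *; linarith
    · right; refine ⟨?_, h2⟩; rw [hinner] at *; linarith

end Stmt7Aux

/-- Let
`D^(s)_min = {x : (x,α) ≥ −1 for α ∈ Π_s, (x,α) ≥ 0 for α ∈ Π_l, (x,θ) ≤ 1}`. Then:
(1) `w = v·t_r ∈ Ŵ` is `s`-minimal iff `w` is dominant and `v(r) ∈ D^(s)_min ∩ Q∨`;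
(2) the map `Ŵ^(s)_min → D^(s)_min ∩ Q∨` sending `w = v·t_r` to `v(r)` is a bijection. -/
theorem statement7 {V : Type*} [NormedAddCommGroup V] [InnerProductSpace ℝ V] {p : ℕ}
    (RS : RootSystemData V p) (htwo : RS.TwoLengths) :
    (∀ (v : V ≃ₗ[ℝ] V) (r : V),
      RS.IsSMinimalPair v r ↔ RS.IsDominantPair v r ∧
        v r ∈ {x : V | (∀ i, RS.IsShort (RS.simpleRoot i) → -1 ≤ ⟪x, RS.simpleRoot i⟫) ∧
            (∀ i, ¬ RS.IsShort (RS.simpleRoot i) → 0 ≤ ⟪x, RS.simpleRoot i⟫) ∧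
            ⟪x, RS.θ⟫ ≤ 1} ∩ (RS.corootLattice : Set V)) ∧
    Set.BijOn (fun vr : (V ≃ₗ[ℝ] V) × V => vr.1 vr.2)
      {vr : (V ≃ₗ[ℝ] V) × V | RS.IsSMinimalPair vr.1 vr.2}
      ({x : V | (∀ i, RS.IsShort (RS.simpleRoot i) → -1 ≤ ⟪x, RS.simpleRoot i⟫) ∧
          (∀ i, ¬ RS.IsShort (RS.simpleRoot i) → 0 ≤ ⟪x, RS.simpleRoot i⟫) ∧
          ⟪x, RS.θ⟫ ≤ 1} ∩ (RS.corootLattice : Set V)) := by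
  classical
  have hpart1 : ∀ (v : V ≃ₗ[ℝ] V) (r : V),
      RS.IsSMinimalPair v r ↔ RS.IsDominantPair v r ∧
        v r ∈ {x : V | (∀ i, RS.IsShort (RS.simpleRoot i) → -1 ≤ ⟪x, RS.simpleRoot i⟫) ∧
            (∀ i, ¬ RS.IsShort (RS.simpleRoot i) → 0 ≤ ⟪x, RS.simpleRoot i⟫) ∧
            ⟪x, RS.θ⟫ ≤ 1} ∩ (RS.corootLattice : Set V) := by
    intro v r
    constructor
    · rintro ⟨hdom, hs, hl, hθ⟩
      have hv := hdom.1
      have hr := hdom.2.1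
      have E : ∀ y : V, ⟪v.symm y, r⟫ = ⟪v r, y⟫ := fun y =>
        (weyl_inner_symm hv y r).trans (real_inner_comm (v r) y)
      refine ⟨hdom, ⟨⟨?_, ?_, ?_⟩, weyl_coroot hv hr⟩⟩
      · intro i hi
        have h := hs i hi
        simp only [affActInv] at h
        rwa [zero_add, E] at h
      · intro i hi
        have h := hl i hi
        simp only [affActInv] at h
        rwa [zero_add, E] at h
      · simp only [affActInv] at hθ
        rw [map_neg, inner_neg_left, E] at hθ
        linarith
    · rintro ⟨hdom, ⟨h1, h2, h3⟩, -⟩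
      have hv := hdom.1
      have E : ∀ y : V, ⟪v.symm y, r⟫ = ⟪v r, y⟫ := fun y =>
        (weyl_inner_symm hv y r).trans (real_inner_comm (v r) y)
      refine ⟨hdom, ?_, ?_, ?_⟩
      · intro i hi
        simp only [affActInv]
        rw [zero_add, E]
        exact h1 i hi
      · intro i hi
        simp only [affActInv]
        rw [zero_add, E]
        exact h2 i hi
      · simp only [affActInv]
        rw [map_neg, inner_neg_left, E]
        linarith
  refine ⟨hpart1, ?_, ?_, ?_⟩
  · -- MapsTo
    rintro ⟨v, r⟩ hmem
    exact ((hpart1 v r).mp hmem).2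
  · -- InjOn
    rintro ⟨v, r⟩ hvr ⟨v', r'⟩ hvr' heq
    simp only [Set.mem_setOf_eq] at hvr hvr'
    simp only at heq
    obtain ⟨hv, hr, hvD⟩ := dominant_iff.mp hvr.1
    obtain ⟨hv', hr', hv'D⟩ := dominant_iff.mp hvr'.1
    rw [← heq] at hv'D
    have hveq : v = v' := unique_adapted hv hv' hvD hv'D
    have hreq : r = r' := by
      apply v.injective
      rw [heq, hveq]
    rw [Prod.ext_iff]
    exact ⟨hveq, hreq⟩
  · -- SurjOn
    intro x hx
    obtain ⟨hxset, hxQ⟩ := hx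
    obtain ⟨v, hv, hadapt⟩ := exists_adapted (D := Dset RS x) (fun β hβ h => Dset_neg_mem hβ h)
    have hr : v.symm x ∈ RS.corootLattice := weyl_coroot (inv_mem hv) hxQ
    have hvr : v (v.symm x) = x := LinearEquiv.apply_symm_apply v x
    have hdom : RS.IsDominantPair v (v.symm x) :=
      dominant_iff.mpr ⟨hv, hr, by rw [hvr]; exact hadapt⟩
    have hmin : RS.IsSMinimalPair v (v.symm x) :=
      (hpart1 v _).mpr ⟨hdom, by rw [hvr]; exact ⟨hxset, hxQ⟩⟩
    exact ⟨(v, v.symm x), hmin, hvr⟩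
end
end
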